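/- For every integer q with 56 ≤ q ≤ 308, let s be the unique integer such that 2^127 ≤ 5^q · 2^s < 2^128 and let T = ⌊5^q · 2^s⌋ (the 128 most significant bits of 5^q, normalized to lie in [2^127, 2^128)). Then for every integer w with 2^63 ≤ w < 2^64, (T · w) mod 2^137 < 2^137 − 2^64. -/

import Mathlib

lemma s_unique {N : ℚ} {s t : ℤ} (h1 : (2:ℚ) ^ ((127:ℤ) + t) ≤ N) (h2 : N < 2 ^ ((128:ℤ) + t))
    (h3 : (2:ℚ) ^ (127:ℕ) ≤ N * 2 ^ s) (h4 : N * 2 ^ s < 2 ^ (128:ℕ)) : s = -t := by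
  have h20 : (0:ℚ) < 2 := by norm_num
  have hs2 : (0:ℚ) < (2:ℚ) ^ s := zpow_pos h20 s
  have hlt1 : (2:ℚ) ^ ((127:ℤ)) < 2 ^ ((128:ℤ) + t + s) := by
    rw [zpow_add₀ (by norm_num : (2:ℚ) ≠ 0) ((128:ℤ) + t) s]
    calc (2:ℚ) ^ ((127:ℤ)) = (2:ℚ) ^ (127:ℕ) := by norm_num
      _ ≤ N * 2 ^ s := h3
      _ < 2 ^ ((128:ℤ) + t) * 2 ^ s := mul_lt_mul_of_pos_right h2 hs2
  have hlt2 : (2:ℚ) ^ ((127:ℤ) + t + s) < 2 ^ ((128:ℤ)) := by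
    rw [zpow_add₀ (by norm_num : (2:ℚ) ≠ 0) ((127:ℤ) + t) s]
    calc (2:ℚ) ^ ((127:ℤ) + t) * 2 ^ s ≤ N * 2 ^ s := mul_le_mul_of_nonneg_right h1 hs2.le
      _ < 2 ^ (128:ℕ) := h4
      _ = 2 ^ ((128:ℤ)) := by norm_num
  have i1 := (zpow_lt_zpow_iff_right₀ (by norm_num : (1:ℚ) < 2)).mp hlt1
  have i2 := (zpow_lt_zpow_iff_right₀ (by norm_num : (1:ℚ) < 2)).mp hlt2
  omega

lemma cert_aux (T a1 b1 a2 b2 : ℤ)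
    (ha1 : 0 < a1) (ha2 : 0 < a2) (hb1 : 0 < b1) (hb2 : b2 < 0)
    (hC1 : (2:ℤ)^64 < b1 - b2)
    (hC2 : (2:ℤ)^64 * a1 + 2^64 * b1 ≤ 2^137)
    (hd1 : (2:ℤ)^137 ∣ T * a1 - b1) (hd2 : (2:ℤ)^137 ∣ T * a2 - b2)
    (hdet : a1 * b2 - a2 * b1 = -2^137) :
    ∀ w : ℤ, 0 < w → w < 2^64 → T * w % 2^137 < 2^137 - 2^64 := by
  intro w hw0 hwW
  by_contra hcon
  push_neg at hcon
  set e : ℤ := T * w % 2^137 - 2^137 with he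
  have hMpos : (0:ℤ) < 2^137 := by positivity
  have he0 : e < 0 := by
    have := Int.emod_lt_of_pos (T * w) hMpos
    simp only [he]; linarith
  have heE : -2^64 ≤ e := by simp only [he]; linarith
  have hde : (2:ℤ)^137 ∣ T * w - e := by
    refine ⟨T * w / 2^137 + 1, ?_⟩
    have := Int.emod_def (T * w) (2^137)
    simp only [he]
    linarith [this]
  obtain ⟨x, hx⟩ := dvd_sub (hd2.mul_left w) (hde.mul_left a2)
  obtain ⟨y, hy⟩ := dvd_sub (hde.mul_left a1) (hd1.mul_left w)
  have hM0 : ((2:ℤ)^137) ≠ 0 := by positivity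
  have hw' : w = x * a1 + y * a2 := by
    have h : (2:ℤ)^137 * w = 2^137 * (x * a1 + y * a2) := by
      linear_combination a1 * hx + a2 * hy + w * hdet
    exact mul_left_cancel₀ hM0 h
  have he' : e = x * b1 + y * b2 := by
    have h : (2:ℤ)^137 * e = 2^137 * (x * b1 + y * b2) := by
      linear_combination b1 * hx + b2 * hy + e * hdet
    exact mul_left_cancel₀ hM0 h
  rcases le_or_gt y 0 with hy0 | hy0
  · rcases le_or_gt x 0 with hx0 | hx0
    · have h1 : x * a1 ≤ 0 := mul_nonpos_of_nonpos_of_nonneg hx0 ha1.le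
      have h2 : y * a2 ≤ 0 := mul_nonpos_of_nonpos_of_nonneg hy0 ha2.le
      linarith [hw']
    · have h1 : b1 ≤ x * b1 := le_mul_of_one_le_left hb1.le hx0
      have h2 : 0 ≤ y * b2 := by nlinarith
      linarith [he']
  · rcases lt_or_ge x 0 with hx0 | hx0
    · have h1 : x * b1 ≤ -b1 := by nlinarith
      have h2 : y * b2 ≤ b2 := by nlinarith
      linarith [he']
    · have h1 : -(2:ℤ)^64 - y * b2 ≤ x * b1 := by linarith [he']
      have h2 : a1 * (-(2:ℤ)^64 - y * b2) ≤ a1 * (x * b1) :=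
        mul_le_mul_of_nonneg_left h1 ha1.le
      have h3 : (2:ℤ)^137 ≤ y * 2^137 := le_mul_of_one_le_left (by positivity) hy0
      have key : (2:ℤ)^64 * b1 ≤ w * b1 := by
        calc (2:ℤ)^64 * b1 ≤ 2^137 - 2^64 * a1 := by linarith
          _ ≤ y * 2^137 - 2^64 * a1 := by linarith
          _ = y * (a2 * b1 - a1 * b2) - 2^64 * a1 := by
              rw [show a2 * b1 - a1 * b2 = 2^137 by linarith]
          _ = a1 * (-(2:ℤ)^64 - y * b2) + y * (a2 * b1) := by ring
          _ ≤ a1 * (x * b1) + y * (a2 * b1) := by linarith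
          _ = w * b1 := by rw [hw']; ring
      have : (2:ℤ)^64 ≤ w := le_of_mul_le_mul_right key hb1
      linarith


lemma pow_split_big (a : ℚ) (n : ℕ) (h : 256 < n) : a ^ n = a ^ 256 * a ^ (n - 256) := by
  rw [← pow_add, Nat.add_sub_cancel' h.le]

/-- For every integer `q` with `56 ≤ q ≤ 308`, if `s` is the (unique) integer with
`2^127 ≤ 5^q * 2^s < 2^128` and `T = ⌊5^q * 2^s⌋` is the normalized 128-bit truncated
power of five, then for every `w` with `2^63 ≤ w < 2^64`,
`(T * w) mod 2^137 < 2^137 - 2^64`: the fallback is never needed. -/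
theorem no_fallback_positive_powers (q : ℤ) (hq : 56 ≤ q) (hq' : q ≤ 308)
    (s : ℤ) (hs : (2 : ℚ) ^ (127 : ℕ) ≤ 5 ^ q * 2 ^ s)
    (hs' : (5 : ℚ) ^ q * 2 ^ s < 2 ^ (128 : ℕ))
    (T : ℤ) (hT : T = ⌊(5 : ℚ) ^ q * 2 ^ s⌋) :
    ∀ w : ℤ, 2 ^ 63 ≤ w → w < 2 ^ 64 →
      (T * w) % 2 ^ 137 < 2 ^ 137 - 2 ^ 64 := by
  intro w hw1 hw2
  have hw0 : (0:ℤ) < w := by linarith [show (0:ℤ) < 2^63 by norm_num]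
  interval_cases q
  · have hs_eq : s = -3 := s_unique (by norm_num) (by norm_num) hs hs'
    rw [hs_eq] at hT
    have hTK : T = 173472347597680709441192448139190673828 := by
      rw [hT, Int.floor_eq_iff]
      constructor <;> norm_num
    exact cert_aux T 47237479084721502383 8047742404178873736988 6288322939696136407 (-2616942544051638353732) (by norm_num) (by norm_num) (by norm_num)
      (by norm_num) (by norm_num) (by norm_num) (by rw [hTK]; norm_num)
      (by rw [hTK]; norm_num) (by norm_num) w hw0 hw2
  · have hs_eq : s = -5 := s_unique (by norm_num) (by norm_num) hs hs'
    rw [hs_eq] at hT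
    have hTK : T = 216840434497100886801490560173988342285 := by
      rw [hT, Int.floor_eq_iff]
      constructor <;> norm_num
    exact cert_aux T 4416837465187391351 4628878145096356787979 3069104432847588873 (-36229103445739975708555) (by norm_num) (by norm_num) (by norm_num)
      (by norm_num) (by norm_num) (by norm_num) (by rw [hTK]; norm_num)
      (by rw [hTK]; norm_num) (by norm_num) w hw0 hw2
  · have hs_eq : s = -7 := s_unique (by norm_num) (by norm_num) hs hs'
    rw [hs_eq] at hT
    have hTK : T = 271050543121376108501863200217485427856 := by
      rw [hT, Int.floor_eq_iff]
      constructor <;> norm_num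
    exact cert_aux T 11214230803019257017 4826555016153321622544 4761111745288948630 (-13486863855709953303456) (by norm_num) (by norm_num) (by norm_num)
      (by norm_num) (by norm_num) (by norm_num) (by rw [hTK]; norm_num)
      (by rw [hTK]; norm_num) (by norm_num) w hw0 hw2
  · have hs_eq : s = -9 := s_unique (by norm_num) (by norm_num) hs hs'
    rw [hs_eq] at hT
    have hTK : T = 338813178901720135627329000271856784820 := by
      rw [hT, Int.floor_eq_iff]
      constructor <;> norm_num
    exact cert_aux T 11214230803019257017 6033193770191652028180 3808889396231158904 (-13486863855709953303456) (by norm_num) (by norm_num) (by norm_num)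
      (by norm_num) (by norm_num) (by norm_num) (by rw [hTK]; norm_num)
      (by rw [hTK]; norm_num) (by norm_num) w hw0 hw2
  · have hs_eq : s = -12 := s_unique (by norm_num) (by norm_num) hs hs'
    rw [hs_eq] at hT
    have hTK : T = 211758236813575084767080625169910490512 := by
      rw [hT, Int.floor_eq_iff]
      constructor <;> norm_num
    exact cert_aux T 11214230803019257017 3765138990968272889104 3851376873366002843 (-14242938765420592808400) (by norm_num) (by norm_num) (by norm_num)
      (by norm_num) (by norm_num) (by norm_num) (by rw [hTK]; norm_num)
      (by rw [hTK]; norm_num) (by norm_num) w hw0 hw2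
  · have hs_eq : s = -14 := s_unique (by norm_num) (by norm_num) hs hs'
    rw [hs_eq] at hT
    have hTK : T = 264697796016968855958850781462388113141 := by
      rw [hT, Int.floor_eq_iff]
      constructor <;> norm_num
    exact cert_aux T 8201109267742205045 7334074791591163296249 3851376873366002843 (-17799822079902375007657) (by norm_num) (by norm_num) (by norm_num)
      (by norm_num) (by norm_num) (by norm_num) (by rw [hTK]; norm_num)
      (by rw [hTK]; norm_num) (by norm_num) w hw0 hw2
  · have hs_eq : s = -16 := s_unique (by norm_num) (by norm_num) hs hs'
    rw [hs_eq] at hT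
    have hTK : T = 330872245021211069948563476827985141426 := by
      rw [hT, Int.floor_eq_iff]
      constructor <;> norm_num
    exact cert_aux T 6560887414193764036 7332434569737614855240 570933166269120825 (-25916957728965117687902) (by norm_num) (by norm_num) (by norm_num)
      (by norm_num) (by norm_num) (by norm_num) (by rw [hTK]; norm_num)
      (by rw [hTK]; norm_num) (by norm_num) w hw0 hw2
  · have hs_eq : s = -19 := s_unique (by norm_num) (by norm_num) hs hs'
    rw [hs_eq] at hT
    have hTK : T = 206795153138256918717852173017490713391 := by
      rw [hT, Int.floor_eq_iff]
      constructor <;> norm_num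
    exact cert_aux T 26586109556536528639 8605580748592983872977 228373266507648330 (-6479296525557906334058) (by norm_num) (by norm_num) (by norm_num)
      (by norm_num) (by norm_num) (by norm_num) (by rw [hTK]; norm_num)
      (by rw [hTK]; norm_num) (by norm_num) w hw0 hw2
  · have hs_eq : s = -21 := s_unique (by norm_num) (by norm_num) hs hs'
    rw [hs_eq] at hT
    have hTK : T = 258493941422821148397315216271863391739 := by
      rw [hT, Int.floor_eq_iff]
      constructor <;> norm_num
    exact cert_aux T 26768808169742647303 4284371612225759168989 182698613206118664 (-6479250850904604804392) (by norm_num) (by norm_num) (by norm_num)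
      (by norm_num) (by norm_num) (by norm_num) (by rw [hTK]; norm_num)
      (by rw [hTK]; norm_num) (by norm_num) w hw0 hw2
  · have hs_eq : s = -23 := s_unique (by norm_num) (by norm_num) hs hs'
    rw [hs_eq] at hT
    have hTK : T = 323117426778526435496644020339829239674 := by
      rw [hT, Int.floor_eq_iff]
      constructor <;> norm_num
    exact cert_aux T 16024745179204364649 4837097608190271669002 10926761603744401318 (-7573958779843091521764) (by norm_num) (by norm_num) (by norm_num)
      (by norm_num) (by norm_num) (by norm_num) (by rw [hTK]; norm_num)
      (by rw [hTK]; norm_num) (by norm_num) w hw0 hw2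
  · have hs_eq : s = -26 := s_unique (by norm_num) (by norm_num) hs hs'
    rw [hs_eq] at hT
    have hTK : T = 201948391736579022185402512712393274796 := by
      rw [hT, Int.floor_eq_iff]
      constructor <;> norm_num
    exact cert_aux T 43849689786680228351 6902576343382134964820 3351107926405767861 (-3445709520446544721252) (by norm_num) (by norm_num) (by norm_num)
      (by norm_num) (by norm_num) (by norm_num) (by rw [hTK]; norm_num)
      (by rw [hTK]; norm_num) (by norm_num) w hw0 hw2
  · have hs_eq : s = -28 := s_unique (by norm_num) (by norm_num) hs hs'
    rw [hs_eq] at hT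
    have hTK : T = 252435489670723777731753140890491593495 := by
      rw [hT, Int.floor_eq_iff]
      constructor <;> norm_num
    exact cert_aux T 19550540670515552057 867006031356158941471 6702215852811535722 (-8614273801116361803130) (by norm_num) (by norm_num) (by norm_num)
      (by norm_num) (by norm_num) (by norm_num) (by rw [hTK]; norm_num)
      (by rw [hTK]; norm_num) (by norm_num) w hw0 hw2
  · have hs_eq : s = -30 := s_unique (by norm_num) (by norm_num) hs hs'
    rw [hs_eq] at hT
    have hTK : T = 315544362088404722164691426113114491869 := by
      rw [hT, Int.floor_eq_iff]
      constructor <;> norm_num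
    exact cert_aux T 19550540670515552057 1088645174362827564853 9271880816352338989 (-8395204323073233983015) (by norm_num) (by norm_num) (by norm_num)
      (by norm_num) (by norm_num) (by norm_num) (by rw [hTK]; norm_num)
      (by rw [hTK]; norm_num) (by norm_num) w hw0 hw2
  · have hs_eq : s = -33 := s_unique (by norm_num) (by norm_num) hs hs'
    rw [hs_eq] at hT
    have hTK : T = 197215226305252951352932141320696557418 := by
      rw [hT, Int.floor_eq_iff]
      constructor <;> norm_num
    exact cert_aux T 55345581300130070207 8602856040163417803798 7618860460644046007 (-1963672791530535555898) (by norm_num) (by norm_num) (by norm_num)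
      (by norm_num) (by norm_num) (by norm_num) (by rw [hTK]; norm_num)
      (by rw [hTK]; norm_num) (by norm_num) w hw0 hw2
  · have hs_eq : s = -35 := s_unique (by norm_num) (by norm_num) hs hs'
    rw [hs_eq] at hT
    have hTK : T = 246519032881566189191165176650870696772 := by
      rw [hT, Int.floor_eq_iff]
      constructor <;> norm_num
    exact cert_aux T 45800237132232865367 8089037723714667482140 7618860460644046007 (-2458400419643491467876) (by norm_num) (by norm_num) (by norm_num)
      (by norm_num) (by norm_num) (by norm_num) (by rw [hTK]; norm_num)
      (by rw [hTK]; norm_num) (by norm_num) w hw0 hw2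
  · have hs_eq : s = -37 := s_unique (by norm_num) (by norm_num) hs hs'
    rw [hs_eq] at hT
    have hTK : T = 308148791101957736488956470813588370966 := by
      rw [hT, Int.floor_eq_iff]
      constructor <;> norm_num
    exact cert_aux T 17414873673717865 5709877475267577790214 16827787243638143 (-9998837230899368436239638) (by norm_num) (by norm_num) (by norm_num)
      (by norm_num) (by norm_num) (by norm_num) (by rw [hTK]; norm_num)
      (by rw [hTK]; norm_num) (by norm_num) w hw0 hw2
  · have hs_eq : s = -40 := s_unique (by norm_num) (by norm_num) hs hs'
    rw [hs_eq] at hT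
    have hTK : T = 192592994438723585305597794258492731853 := by
      rw [hT, Int.floor_eq_iff]
      constructor <;> norm_num
    exact cert_aux T 13931898938974292 2854928288709584664388 2308801874584129 (-12504970152515487976251635) (by norm_num) (by norm_num) (by norm_num)
      (by norm_num) (by norm_num) (by norm_num) (by rw [hTK]; norm_num)
      (by rw [hTK]; norm_num) (by norm_num) w hw0 hw2
  · have hs_eq : s = -42 := s_unique (by norm_num) (by norm_num) hs hs'
    rw [hs_eq] at hT
    have hTK : T = 240741243048404481631997242823115914817 := by
      rw [hT, Int.floor_eq_iff]
      constructor <;> norm_num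
    exact cert_aux T 12241028168157729777 9191635717555481898545 12185300572401832609 (-5083047521689258346271) (by norm_num) (by norm_num) (by norm_num)
      (by norm_num) (by norm_num) (by norm_num) (by rw [hTK]; norm_num)
      (by rw [hTK]; norm_num) (by norm_num) w hw0 hw2
  · have hs_eq : s = -44 := s_unique (by norm_num) (by norm_num) hs hs'
    rw [hs_eq] at hT
    have hTK : T = 300926553810505602039996553528894893521 := by
      rw [hT, Int.floor_eq_iff]
      constructor <;> norm_num
    exact cert_aux T 441854630504075362497 8982580243284440091281 7322325862592278999 (-245445412921406768249) (by norm_num) (by norm_num) (by norm_num)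
      (by norm_num) (by norm_num) (by norm_num) (by rw [hTK]; norm_num)
      (by rw [hTK]; norm_num) (by norm_num) w hw0 hw2
  · have hs_eq : s = -47 := s_unique (by norm_num) (by norm_num) hs hs'
    rw [hs_eq] at hT
    have hTK : T = 188079096131566001274997845955559308450 := by
      rw [hT, Int.floor_eq_iff]
      constructor <;> norm_num
    exact cert_aux T 18076597819929194109 2584197134301539874586 4348813440950649665 (-9016430096824614859998) (by norm_num) (by norm_num) (by norm_num)
      (by norm_num) (by norm_num) (by norm_num) (by rw [hTK]; norm_num)
      (by rw [hTK]; norm_num) (by norm_num) w hw0 hw2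
  · have hs_eq : s = -49 := s_unique (by norm_num) (by norm_num) hs hs'
    rw [hs_eq] at hT
    have hTK : T = 235098870164457501593747307444449135563 := by
      rw [hT, Int.floor_eq_iff]
      constructor <;> norm_num
    exact cert_aux T 16337072443548934243 7746630002511006740353 3479050752760519732 (-9014690571448234600132) (by norm_num) (by norm_num) (by norm_num)
      (by norm_num) (by norm_num) (by norm_num) (by rw [hTK]; norm_num)
      (by rw [hTK]; norm_num) (by norm_num) w hw0 hw2
  · have hs_eq : s = -51 := s_unique (by norm_num) (by norm_num) hs hs'
    rw [hs_eq] at hT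
    have hTK : T = 293873587705571876992184134305561419454 := by
      rw [hT, Int.floor_eq_iff]
      constructor <;> norm_num
    exact cert_aux T 441854630504075362497 8727175157921890872638 3963224639261890795 (-316024336074491492246) (by norm_num) (by norm_num) (by norm_num)
      (by norm_num) (by norm_num) (by norm_num) (by rw [hTK]; norm_num)
      (by rw [hTK]; norm_num) (by norm_num) w hw0 hw2
  · have hs_eq : s = -54 := s_unique (by norm_num) (by norm_num) hs hs'
    rw [hs_eq] at hT
    have hTK : T = 183670992315982423120115083940975887159 := by
      rw [hT, Int.floor_eq_iff]
      constructor <;> norm_num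
    exact cert_aux T 936816471174260061647 8496469250572062358649 3170579711409512636 (-157219523109393367964) (by norm_num) (by norm_num) (by norm_num)
      (by norm_num) (by norm_num) (by norm_num) (by rw [hTK]; norm_num)
      (by rw [hTK]; norm_num) (by norm_num) w hw0 hw2
  · have hs_eq : s = -56 := s_unique (by norm_num) (by norm_num) hs hs'
    rw [hs_eq] at hT
    have hTK : T = 229588740394978028900143854926219858948 := by
      rw [hT, Int.floor_eq_iff]
      constructor <;> norm_num
    exact cert_aux T 81465931873774290287 8626932953554857984444 12682318845638050544 (-795609354681195377728) (by norm_num) (by norm_num) (by norm_num)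
      (by norm_num) (by norm_num) (by norm_num) (by rw [hTK]; norm_num)
      (by rw [hTK]; norm_num) (by norm_num) w hw0 hw2
  · have hs_eq : s = -58 := s_unique (by norm_num) (by norm_num) hs hs'
    rw [hs_eq] at hT
    have hTK : T = 286985925493722536125179818657774823686 := by
      rw [hT, Int.floor_eq_iff]
      constructor <;> norm_num
    exact cert_aux T 38733704047754133737 7304542773895092999798 3998523778266022813 (-3743953423972839228754) (by norm_num) (by norm_num) (by norm_num)
      (by norm_num) (by norm_num) (by norm_num) (by rw [hTK]; norm_num)
      (by rw [hTK]; norm_num) (by norm_num) w hw0 hw2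
  · have hs_eq : s = -61 := s_unique (by norm_num) (by norm_num) hs hs'
    rw [hs_eq] at hT
    have hTK : T = 179366203433576585078237386661109264803 := by
      rw [hT, Int.floor_eq_iff]
      constructor <;> norm_num
    exact cert_aux T 13094367352142039807 3220297451949481430877 2899727760922051445 (-12592176583216377571201) (by norm_num) (by norm_num) (by norm_num)
      (by norm_num) (by norm_num) (by norm_num) (by rw [hTK]; norm_num)
      (by rw [hTK]; norm_num) (by norm_num) w hw0 hw2
  · have hs_eq : s = -63 := s_unique (by norm_num) (by norm_num) hs hs'
    rw [hs_eq] at hT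
    have hTK : T = 224207754291970731347796733326386581004 := by
      rw [hT, Int.floor_eq_iff]
      constructor <;> norm_num
    exact cert_aux T 54117306065121390095 6670884148851404323508 579945552184410289 (-3147899159416048290228) (by norm_num) (by norm_num) (by norm_num)
      (by norm_num) (by norm_num) (by norm_num) (by rw [hTK]; norm_num)
      (by rw [hTK]; norm_num) (by norm_num) w hw0 hw2
  · have hs_eq : s = -65 := s_unique (by norm_num) (by norm_num) hs hs'
    rw [hs_eq] at hT
    have hTK : T = 280259692864963414184745916657983226256 := by
      rw [hT, Int.floor_eq_iff]
      constructor <;> norm_num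
    exact cert_aux T 43293844852097112076 6714177993703501435584 579945552184410289 (-3934294003717875952496) (by norm_num) (by norm_num) (by norm_num)
      (by norm_num) (by norm_num) (by norm_num) (by rw [hTK]; norm_num)
      (by rw [hTK]; norm_num) (by norm_num) w hw0 hw2
  · have hs_eq : s = -68 := s_unique (by norm_num) (by norm_num) hs hs'
    rw [hs_eq] at hT
    have hTK : T = 175162308040602133865466197911239516410 := by
      rw [hT, Int.floor_eq_iff]
      constructor <;> norm_num
    exact cert_aux T 33359195666871987025 8766743251963830152474 1159891104368820578 (-4917867504647344940620) (by norm_num) (by norm_num) (by norm_num)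
      (by norm_num) (by norm_num) (by norm_num) (by rw [hTK]; norm_num)
      (by rw [hTK]; norm_num) (by norm_num) w hw0 hw2
  · have hs_eq : s = -70 := s_unique (by norm_num) (by norm_num) hs hs'
    rw [hs_eq] at hT
    have hTK : T = 218952885050752667331832747389049395512 := by
      rw [hT, Int.floor_eq_iff]
      constructor <;> norm_num
    exact cert_aux T 5511948029005576827 8336264219785635925480 4639564417475282312 (-24591657305445462344256) (by norm_num) (by norm_num) (by norm_num)
      (by norm_num) (by norm_num) (by norm_num) (by rw [hTK]; norm_num)
      (by rw [hTK]; norm_num) (by norm_num) w hw0 hw2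
  · have hs_eq : s = -72 := s_unique (by norm_num) (by norm_num) hs hs'
    rw [hs_eq] at hT
    have hTK : T = 273691106313440834164790934236311744390 := by
      rw [hT, Int.floor_eq_iff]
      constructor <;> norm_num
    exact cert_aux T 21349885226798071696 8753399573697081357664 5162994584393459021 (-6043630487883504228018) (by norm_num) (by norm_num) (by norm_num)
      (by norm_num) (by norm_num) (by norm_num) (by rw [hTK]; norm_num)
      (by rw [hTK]; norm_num) (by norm_num) w hw0 hw2
  · have hs_eq : s = -75 := s_unique (by norm_num) (by norm_num) hs hs'
    rw [hs_eq] at hT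
    have hTK : T = 171056941445900521352994333897694840244 := by
      rw [hT, Int.floor_eq_iff]
      constructor <;> norm_num
    exact cert_aux T 1311761672568386049 7476854510740478635444 975553249048045349 (-127256730886231546642684) (by norm_num) (by norm_num) (by norm_num)
      (by norm_num) (by norm_num) (by norm_num) (by rw [hTK]; norm_num)
      (by rw [hTK]; norm_num) (by norm_num) w hw0 hw2
  · have hs_eq : s = -77 := s_unique (by norm_num) (by norm_num) hs hs'
    rw [hs_eq] at hT
    have hTK : T = 213821176807375651691242917372118550305 := by
      rw [hT, Int.floor_eq_iff]
      constructor <;> norm_num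
    exact cert_aux T 1311761672568386049 9346068138425598294305 1042794933752113489 (-125387517258546426983823) (by norm_num) (by norm_num) (by norm_num)
      (by norm_num) (by norm_num) (by norm_num) (by rw [hTK]; norm_num)
      (by rw [hTK]; norm_num) (by norm_num) w hw0 hw2
  · have hs_eq : s = -79 := s_unique (by norm_num) (by norm_num) hs hs'
    rw [hs_eq] at hT
    have hTK : T = 267276471009219564614053646715148187881 := by
      rw [hT, Int.floor_eq_iff]
      constructor <;> norm_num
    exact cert_aux T 15525966679767614540 5453555187742007232812 6451221667315421221 (-8955479638742852154963) (by norm_num) (by norm_num) (by norm_num)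
      (by norm_num) (by norm_num) (by norm_num) (by rw [hTK]; norm_num)
      (by rw [hTK]; norm_num) (by norm_num) w hw0 hw2
  · have hs_eq : s = -81 := s_unique (by norm_num) (by norm_num) hs hs'
    rw [hs_eq] at hT
    have hTK : T = 334095588761524455767567058393935234851 := by
      rw [hT, Int.floor_eq_iff]
      constructor <;> norm_num
    exact cert_aux T 12420773343814091632 5450449994406053709904 9556415003268944129 (-9833349855243880621533) (by norm_num) (by norm_num) (by norm_num)
      (by norm_num) (by norm_num) (by norm_num) (by rw [hTK]; norm_num)
      (by rw [hTK]; norm_num) (by norm_num) w hw0 hw2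
  · have hs_eq : s = -84 := s_unique (by norm_num) (by norm_num) hs hs'
    rw [hs_eq] at hT
    have hTK : T = 208809742975952784854729411496209521782 := by
      rw [hT, Int.floor_eq_iff]
      constructor <;> norm_num
    exact cert_aux T 15477799680685939459 6000247201970867816290 6499388666397096302 (-8736812466451124256588) (by norm_num) (by norm_num) (by norm_num)
      (by norm_num) (by norm_num) (by norm_num) (by rw [hTK]; norm_num)
      (by rw [hTK]; norm_num) (by norm_num) w hw0 hw2
  · have hs_eq : s = -86 := s_unique (by norm_num) (by norm_num) hs hs'
    rw [hs_eq] at hT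
    have hTK : T = 261012178719940981068411764370261902228 := by
      rw [hT, Int.floor_eq_iff]
      constructor <;> norm_num
    exact cert_aux T 495804469578349371 5868715935953068257052 215722247514217916 (-348844292224482376457040) (by norm_num) (by norm_num) (by norm_num)
      (by norm_num) (by norm_num) (by norm_num) (by rw [hTK]; norm_num)
      (by rw [hTK]; norm_num) (by norm_num) w hw0 hw2
  · have hs_eq : s = -88 := s_unique (by norm_num) (by norm_num) hs hs'
    rw [hs_eq] at hT
    have hTK : T = 326265223399926226335514705462827377785 := by
      rw [hT, Int.floor_eq_iff]
      constructor <;> norm_num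
    exact cert_aux T 54034343653902994191 8844172832567134737943 11787274381054732322 (-1295026001625674645486) (by norm_num) (by norm_num) (by norm_num)
      (by norm_num) (by norm_num) (by norm_num) (by rw [hTK]; norm_num)
      (by rw [hTK]; norm_num) (by norm_num) w hw0 hw2
  · have hs_eq : s = -91 := s_unique (by norm_num) (by norm_num) hs hs'
    rw [hs_eq] at hT
    have hTK : T = 203915764624953891459696690914267111115 := by
      rw [hT, Int.floor_eq_iff]
      constructor <;> norm_num
    exact cert_aux T 6885246129684064903 8760869745587593284365 2335048298445815948 (-22332900665416953260284) (by norm_num) (by norm_num) (by norm_num)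
      (by norm_num) (by norm_num) (by norm_num) (by rw [hTK]; norm_num)
      (by rw [hTK]; norm_num) (by norm_num) w hw0 hw2
  · have hs_eq : s = -93 := s_unique (by norm_num) (by norm_num) hs hs'
    rw [hs_eq] at hT
    have hTK : T = 254894705781192364324620863642833888894 := by
      rw [hT, Int.floor_eq_iff]
      constructor <;> norm_num
    exact cert_aux T 57021946935621201747 8470373470814045084890 11040373560625180433 (-1415393350894270402466) (by norm_num) (by norm_num) (by norm_num)
      (by norm_num) (by norm_num) (by norm_num) (by rw [hTK]; norm_num)
      (by rw [hTK]; norm_num) (by norm_num) w hw0 hw2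
  · have hs_eq : s = -95 := s_unique (by norm_num) (by norm_num) hs hs'
    rw [hs_eq] at hT
    have hTK : T = 318618382226490455405776079553542361118 := by
      rw [hT, Int.floor_eq_iff]
      constructor <;> norm_num
    exact cert_aux T 16184554637873372439 5304824025896662030514 5896192483376988427 (-8832267029571712856246) (by norm_num) (by norm_num) (by norm_num)
      (by norm_num) (by norm_num) (by norm_num) (by rw [hTK]; norm_num)
      (by rw [hTK]; norm_num) (by norm_num) w hw0 hw2
  · have hs_eq : s = -98 := s_unique (by norm_num) (by norm_num) hs hs'
    rw [hs_eq] at hT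
    have hTK : T = 199136488891556534628610049720963975698 := by
      rw [hT, Int.floor_eq_iff]
      constructor <;> norm_num
    exact cert_aux T 9409928220272504895 5957454702872518957678 2382456746481471959 (-17006632778562225510626) (by norm_num) (by norm_num) (by norm_num)
      (by norm_num) (by norm_num) (by norm_num) (by rw [hTK]; norm_num)
      (by rw [hTK]; norm_num) (by norm_num) w hw0 hw2
  · have hs_eq : s = -100 := s_unique (by norm_num) (by norm_num) hs hs'
    rw [hs_eq] at hT
    have hTK : T = 248920611114445668285762562151204969623 := by
      rw [hT, Int.floor_eq_iff]
      constructor <;> norm_num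
    exact cert_aux T 7527942576218003916 5961218674160627959636 6146428034590473917 (-18276490407749227172485) (by norm_num) (by norm_num) (by norm_num)
      (by norm_num) (by norm_num) (by norm_num) (by rw [hTK]; norm_num)
      (by rw [hTK]; norm_num) (by norm_num) w hw0 hw2
  · have hs_eq : s = -102 := s_unique (by norm_num) (by norm_num) hs hs'
    rw [hs_eq] at hT
    have hTK : T = 311150763893057085357203202689006212029 := by
      rw [hT, Int.floor_eq_iff]
      constructor <;> norm_num
    exact cert_aux T 13273993728866901049 7356633244816165851413 9710210881728687483 (-7743721578930860247857) (by norm_num) (by norm_num) (by norm_num)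
      (by norm_num) (by norm_num) (by norm_num) (by rw [hTK]; norm_num)
      (by rw [hTK]; norm_num) (by norm_num) w hw0 hw2
  · have hs_eq : s = -105 := s_unique (by norm_num) (by norm_num) hs hs'
    rw [hs_eq] at hT
    have hTK : T = 194469227433160678348252001680628882518 := by
      rw [hT, Int.floor_eq_iff]
      constructor <;> norm_num
    exact cert_aux T 111945922801651301023 9230428719513959241066 6538883098464855203 (-1017168599518002437438) (by norm_num) (by norm_num) (by norm_num)
      (by norm_num) (by norm_num) (by norm_num) (by rw [hTK]; norm_num)
      (by rw [hTK]; norm_num) (by norm_num) w hw0 hw2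
  · have hs_eq : s = -107 := s_unique (by norm_num) (by norm_num) hs hs'
    rw [hs_eq] at hT
    have hTK : T = 243086534291450847935315002100786103148 := by
      rw [hT, Int.floor_eq_iff]
      constructor <;> norm_num
    exact cert_aux T 22546166585880012719 8949453991001429986004 13077766196929710406 (-2536382615696541238392) (by norm_num) (by norm_num) (by norm_num)
      (by norm_num) (by norm_num) (by norm_num) (by rw [hTK]; norm_num)
      (by rw [hTK]; norm_num) (by norm_num) w hw0 hw2
  · have hs_eq : s = -109 := s_unique (by norm_num) (by norm_num) hs hs'
    rw [hs_eq] at hT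
    have hTK : T = 303858167864313559919143752625982628935 := by
      rw [hT, Int.floor_eq_iff]
      constructor <;> norm_num
    exact cert_aux T 8296593472756123469 7980281801099343108699 3609365807979408093 (-17527774027993140578485) (by norm_num) (by norm_num) (by norm_num)
      (by norm_num) (by norm_num) (by norm_num) (by rw [hTK]; norm_num)
      (by rw [hTK]; norm_num) (by norm_num) w hw0 hw2
  · have hs_eq : s = -112 := s_unique (by norm_num) (by norm_num) hs hs'
    rw [hs_eq] at hT
    have hTK : T = 189911354915195974949464845391239143084 := by
      rw [hT, Int.floor_eq_iff]
      constructor <;> norm_num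
    exact cert_aux T 19696251963255234869 6583557875027090916764 6206130035485975862 (-6771143862485041753016) (by norm_num) (by norm_num) (by norm_num)
      (by norm_num) (by norm_num) (by norm_num) (by rw [hTK]; norm_num)
      (by rw [hTK]; norm_num) (by norm_num) w hw0 hw2
  · have hs_eq : s = -114 := s_unique (by norm_num) (by norm_num) hs hs'
    rw [hs_eq] at hT
    have hTK : T = 237389193643994968686831056739048928855 := by
      rw [hT, Int.floor_eq_iff]
      constructor <;> norm_num
    exact cert_aux T 19696251963255234869 8229447343783863645955 16782655206341921611 (-1833475456214723565443) (by norm_num) (by norm_num) (by norm_num)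
      (by norm_num) (by norm_num) (by norm_num) (by rw [hTK]; norm_num)
      (by rw [hTK]; norm_num) (by norm_num) w hw0 hw2
  · have hs_eq : s = -116 := s_unique (by norm_num) (by norm_num) hs hs'
    rw [hs_eq] at hT
    have hTK : T = 296736492054993710858538820923811161069 := by
      rw [hT, Int.floor_eq_iff]
      constructor <;> norm_num
    exact cert_aux T 29183125735677725184 6403267669003059511808 2191092338503059019 (-5489282490968348732305) (by norm_num) (by norm_num) (by norm_num)
      (by norm_num) (by norm_num) (by norm_num) (by rw [hTK]; norm_num)
      (by rw [hTK]; norm_num) (by norm_num) w hw0 hw2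
  · have hs_eq : s = -119 := s_unique (by norm_num) (by norm_num) hs hs'
    rw [hs_eq] at hT
    have hTK : T = 185460307534371069286586763077381975668 := by
      rw [hT, Int.floor_eq_iff]
      constructor <;> norm_num
    exact cert_aux T 19402534379236673913 9374651320043517495508 4382184677006118038 (-6862150886795061680136) (by norm_num) (by norm_num) (by norm_num)
      (by norm_num) (by norm_num) (by norm_num) (by rw [hTK]; norm_num)
      (by rw [hTK]; norm_num) (by norm_num) w hw0 hw2
  · have hs_eq : s = -121 := s_unique (by norm_num) (by norm_num) hs hs'
    rw [hs_eq] at hT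
    have hTK : T = 231825384417963836608233453846727469585 := by
      rw [hT, Int.floor_eq_iff]
      constructor <;> norm_num
    exact cert_aux T 26788788996688903126 7199826093270214563126 7386254617452229213 (-4518488056784182306259) (by norm_num) (by norm_num) (by norm_num)
      (by norm_num) (by norm_num) (by norm_num) (by rw [hTK]; norm_num)
      (by rw [hTK]; norm_num) (by norm_num) w hw0 hw2
  · have hs_eq : s = -123 := s_unique (by norm_num) (by norm_num) hs hs'
    rw [hs_eq] at hT
    have hTK : T = 289781730522454795760291817308409336981 := by
      rw [hT, Int.floor_eq_iff]
      constructor <;> norm_num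
    exact cert_aux T 58560576658473146525 8277614466321045444449 9789510569809118153 (-1591356896913035368451) (by norm_num) (by norm_num) (by norm_num)
      (by norm_num) (by norm_num) (by norm_num) (by rw [hTK]; norm_num)
      (by rw [hTK]; norm_num) (by norm_num) w hw0 hw2
  · have hs_eq : s = -126 := s_unique (by norm_num) (by norm_num) hs hs'
    rw [hs_eq] at hT
    have hTK : T = 181113581576534247350182385817755835613 := by
      rw [hT, Int.floor_eq_iff]
      constructor <;> norm_num
    exact cert_aux T 38981555518854910219 7157832468152090749567 7866905807923607001 (-3024881292657415341995) (by norm_num) (by norm_num) (by norm_num)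
      (by norm_num) (by norm_num) (by norm_num) (by rw [hTK]; norm_num)
      (by rw [hTK]; norm_num) (by norm_num) w hw0 hw2
  · have hs_eq : s = -128 := s_unique (by norm_num) (by norm_num) hs hs'
    rw [hs_eq] at hT
    have hTK : T = 226391976970667809187727982272194794517 := by
      rw [hT, Int.floor_eq_iff]
      constructor <;> norm_num
    exact cert_aux T 29611863253499206775 7936261688756568990147 7866905807923607001 (-3775201436465826472243) (by norm_num) (by norm_num) (by norm_num)
      (by norm_num) (by norm_num) (by norm_num) (by rw [hTK]; norm_num)
      (by rw [hTK]; norm_num) (by norm_num) w hw0 hw2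
  · have hs_eq : s = -130 := s_unique (by norm_num [pow_split_big]) (by norm_num [pow_split_big]) hs hs'
    rw [hs_eq] at hT
    have hTK : T = 282989971213334761484659977840243493146 := by
      rw [hT, Int.floor_eq_iff]
      constructor <;> norm_num
    exact cert_aux T 11844745301399682710 3965169658052934574396 9811438965147372647 (-11424521873094995271306) (by norm_num) (by norm_num) (by norm_num)
      (by norm_num) (by norm_num) (by norm_num) (by rw [hTK]; norm_num)
      (by rw [hTK]; norm_num) (by norm_num) w hw0 hw2
  · have hs_eq : s = -133 := s_unique (by norm_num [pow_split_big]) (by norm_num [pow_split_big]) hs hs'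
    rw [hs_eq] at hT
    have hTK : T = 176868732008334225927912486150152183216 := by
      rw [hT, Int.floor_eq_iff]
      constructor <;> norm_num
    exact cert_aux T 18951592482239492336 3960431759932374701312 9811438965147372647 (-7142779030425658887728) (by norm_num) (by norm_num) (by norm_num)
      (by norm_num) (by norm_num) (by norm_num) (by rw [hTK]; norm_num)
      (by rw [hTK]; norm_num) (by norm_num) w hw0 hw2
  · have hs_eq : s = -135 := s_unique (by norm_num [pow_split_big]) (by norm_num [pow_split_big]) hs hs'
    rw [hs_eq] at hT
    have hTK : T = 221085915010417782409890607687690229020 := by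
      rw [hT, Int.floor_eq_iff]
      constructor <;> norm_num
    exact cert_aux T 5618349199866322405 3765910637572602072588 2767830330695778079 (-29154679488781953437084) (by norm_num) (by norm_num) (by norm_num)
      (by norm_num) (by norm_num) (by norm_num) (by rw [hTK]; norm_num)
      (by rw [hTK]; norm_num) (by norm_num) w hw0 hw2
  · have hs_eq : s = -137 := s_unique (by norm_num [pow_split_big]) (by norm_num [pow_split_big]) hs hs'
    rw [hs_eq] at hT
    have hTK : T = 276357393763022228012363259609612786275 := by
      rw [hT, Int.floor_eq_iff]
      constructor <;> norm_num
    exact cert_aux T 4494679359893057924 3765910637572602072588 2767830330695778079 (-36443349360977441796355) (by norm_num) (by norm_num) (by norm_num)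
      (by norm_num) (by norm_num) (by norm_num) (by rw [hTK]; norm_num)
      (by rw [hTK]; norm_num) (by norm_num) w hw0 hw2
  · have hs_eq : s = -140 := s_unique (by norm_num [pow_split_big]) (by norm_num [pow_split_big]) hs hs'
    rw [hs_eq] at hT
    have hTK : T = 172723371101888892507727037256007991422 := by
      rw [hT, Int.floor_eq_iff]
      constructor <;> norm_num
    exact cert_aux T 26622706353518891575 9099335229372692150034 17287977827893319758 (-635377408477519120796) (by norm_num) (by norm_num) (by norm_num)
      (by norm_num) (by norm_num) (by norm_num) (by rw [hTK]; norm_num)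
      (by rw [hTK]; norm_num) (by norm_num) w hw0 hw2
  · have hs_eq : s = -142 := s_unique (by norm_num [pow_split_big]) (by norm_num [pow_split_big]) hs hs'
    rw [hs_eq] at hT
    have hTK : T = 215904213877361115634658796570009989277 := by
      rw [hT, Int.floor_eq_iff]
      constructor <;> norm_num
    exact cert_aux T 10649082541407556630 4544343073415642296702 7953249302267747941 (-12966589182560796863503) (by norm_num) (by norm_num) (by norm_num)
      (by norm_num) (by norm_num) (by norm_num) (by rw [hTK]; norm_num)
      (by rw [hTK]; norm_num) (by norm_num) w hw0 hw2
  · have hs_eq : s = -144 := s_unique (by norm_num [pow_split_big]) (by norm_num [pow_split_big]) hs hs'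
    rw [hs_eq] at hT
    have hTK : T = 269880267346701394543323495712512486597 := by
      rw [hT, Int.floor_eq_iff]
      constructor <;> norm_num
    exact cert_aux T 8519266033126045304 4550732522940486830680 7953249302267747941 (-16202271541224295268423) (by norm_num) (by norm_num) (by norm_num)
      (by norm_num) (by norm_num) (by norm_num) (by rw [hTK]; norm_num)
      (by rw [hTK]; norm_num) (by norm_num) w hw0 hw2
  · have hs_eq : s = -146 := s_unique (by norm_num [pow_split_big]) (by norm_num [pow_split_big]) hs hs'
    rw [hs_eq] at hT
    have hTK : T = 337350334183376743179154369640640608246 := by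
      rw [hT, Int.floor_eq_iff]
      constructor <;> norm_num
    exact cert_aux T 50549579467897974461 8176601446980699112606 3294503067078758649 (-2913708380337721799098) (by norm_num) (by norm_num) (by norm_num)
      (by norm_num) (by norm_num) (by norm_num) (by rw [hTK]; norm_num)
      (by rw [hTK]; norm_num) (by norm_num) w hw0 hw2
  · have hs_eq : s = -149 := s_unique (by norm_num [pow_split_big]) (by norm_num [pow_split_big]) hs hs'
    rw [hs_eq] at hT
    have hTK : T = 210843958864610464486971481025400380154 := by
      rw [hT, Int.floor_eq_iff]
      constructor <;> norm_num
    exact cert_aux T 14948626879833175946 4961595898802854871236 5703698828398446623 (-9761774397178653174714) (by norm_num) (by norm_num) (by norm_num)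
      (by norm_num) (by norm_num) (by norm_num) (by rw [hTK]; norm_num)
      (by rw [hTK]; norm_num) (by norm_num) w hw0 hw2
  · have hs_eq : s = -151 := s_unique (by norm_num [pow_split_big]) (by norm_num [pow_split_big]) hs hs'
    rw [hs_eq] at hT
    have hTK : T = 263554948580763080608714351281750475192 := by
      rw [hT, Int.floor_eq_iff]
      constructor <;> norm_num
    exact cert_aux T 7120190517612959703 36794254847957662088 4287207139183933543 (-24446933946622989045496) (by norm_num) (by norm_num) (by norm_num)
      (by norm_num) (by norm_num) (by norm_num) (by rw [hTK]; norm_num)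
      (by rw [hTK]; norm_num) (by norm_num) w hw0 hw2
  · have hs_eq : s = -153 := s_unique (by norm_num [pow_split_big]) (by norm_num [pow_split_big]) hs hs'
    rw [hs_eq] at hT
    have hTK : T = 329443685725953850760892939102188093990 := by
      rw [hT, Int.floor_eq_iff]
      constructor <;> norm_num
    exact cert_aux T 21927168228524684341 6258910506047577909726 6553593841927154471 (-6074939231807789599286) (by norm_num) (by norm_num) (by norm_num)
      (by norm_num) (by norm_num) (by norm_num) (by rw [hTK]; norm_num)
      (by rw [hTK]; norm_num) (by norm_num) w hw0 hw2
  · have hs_eq : s = -156 := s_unique (by norm_num [pow_split_big]) (by norm_num [pow_split_big]) hs hs'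
    rw [hs_eq] at hT
    have hTK : T = 205902303578721156725558086938867558744 := by
      rw [hT, Int.floor_eq_iff]
      constructor <;> norm_num
    exact cert_aux T 2670550790031363451 8422698309273139156296 562761908273776733 (-63464285615848245885704) (by norm_num) (by norm_num) (by norm_num)
      (by norm_num) (by norm_num) (by norm_num) (by rw [hTK]; norm_num)
      (by rw [hTK]; norm_num) (by norm_num) w hw0 hw2
  · have hs_eq : s = -158 := s_unique (by norm_num [pow_split_big]) (by norm_num [pow_split_big]) hs hs'
    rw [hs_eq] at hT
    have hTK : T = 257377879473401445906947608673584448430 := by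
      rw [hT, Int.floor_eq_iff]
      constructor <;> norm_num
    exact cert_aux T 14224521253127355985 7149324798389220101646 1180772697667300727 (-11654722249325491893278) (by norm_num) (by norm_num) (by norm_num)
      (by norm_num) (by norm_num) (by norm_num) (by rw [hTK]; norm_num)
      (by rw [hTK]; norm_num) (by norm_num) w hw0 hw2
  · have hs_eq : s = -160 := s_unique (by norm_num [pow_split_big]) (by norm_num [pow_split_big]) hs hs'
    rw [hs_eq] at hT
    have hTK : T = 321722349341751807383684510841980560538 := by
      rw [hT, Int.floor_eq_iff]
      constructor <;> norm_num
    exact cert_aux T 5689808501250942394 3577507303445235522020 5206449645960072651 (-27346871198893444671458) (by norm_num) (by norm_num) (by norm_num)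
      (by norm_num) (by norm_num) (by norm_num) (by rw [hTK]; norm_num)
      (by rw [hTK]; norm_num) (by norm_num) w hw0 hw2
  · have hs_eq : s = -163 := s_unique (by norm_num [pow_split_big]) (by norm_num [pow_split_big]) hs hs'
    rw [hs_eq] at hT
    have hTK : T = 201076468338594879614802819276237850336 := by
      rw [hT, Int.floor_eq_iff]
      constructor <;> norm_num
    exact cert_aux T 52056222898334148179 8961011000708515642016 2179251629442203009 (-2971715299838386694432) (by norm_num) (by norm_num) (by norm_num)
      (by norm_num) (by norm_num) (by norm_num) (by rw [hTK]; norm_num)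
      (by rw [hTK]; norm_num) (by norm_num) w hw0 hw2
  · have hs_eq : s = -165 := s_unique (by norm_num [pow_split_big]) (by norm_num [pow_split_big]) hs hs'
    rw [hs_eq] at hT
    have hTK : T = 251345585423243599518503524095297312920 := by
      rw [hT, Int.floor_eq_iff]
      constructor <;> norm_num
    exact cert_aux T 88520160547995924308 9006876101901871200736 12154645883220592043 (-731462549661257783928) (by norm_num) (by norm_num) (by norm_num)
      (by norm_num) (by norm_num) (by norm_num) (by rw [hTK]; norm_num)
      (by rw [hTK]; norm_num) (by norm_num) w hw0 hw2
  · have hs_eq : s = -167 := s_unique (by norm_num [pow_split_big]) (by norm_num [pow_split_big]) hs hs'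
    rw [hs_eq] at hT
    have hTK : T = 314181981779054499398129405119121641150 := by
      rw [hT, Int.floor_eq_iff]
      constructor <;> norm_num
    exact cert_aux T 73247057615040857855 8824010464486556754754 12154645883220592043 (-914328187076572229910) (by norm_num) (by norm_num) (by norm_num)
      (by norm_num) (by norm_num) (by norm_num) (by rw [hTK]; norm_num)
      (by rw [hTK]; norm_num) (by norm_num) w hw0 hw2
  · have hs_eq : s = -170 := s_unique (by norm_num [pow_split_big]) (by norm_num [pow_split_big]) hs hs'
    rw [hs_eq] at hT
    have hTK : T = 196363738611909062123830878199451025719 := by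
      rw [hT, Int.floor_eq_iff]
      constructor <;> norm_num
    exact cert_aux T 14649411523008171571 1106663660941571637237 9340697927715706918 (-11187313609265849788886) (by norm_num) (by norm_num) (by norm_num)
      (by norm_num) (by norm_num) (by norm_num) (by rw [hTK]; norm_num)
      (by rw [hTK]; norm_num) (by norm_num) w hw0 hw2
  · have hs_eq : s = -172 := s_unique (by norm_num [pow_split_big]) (by norm_num [pow_split_big]) hs hs'
    rw [hs_eq] at hT
    have hTK : T = 245454673264886327654788597749313782148 := by
      rw [hT, Int.floor_eq_iff]
      constructor <;> norm_num
    exact cert_aux T 13843014656523523118 7243270035052889707960 8534301061231058465 (-8120220017509917726204) (by norm_num) (by norm_num) (by norm_num)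
      (by norm_num) (by norm_num) (by norm_num) (by rw [hTK]; norm_num)
      (by rw [hTK]; norm_num) (by norm_num) w hw0 hw2
  · have hs_eq : s = -174 := s_unique (by norm_num [pow_split_big]) (by norm_num [pow_split_big]) hs hs'
    rw [hs_eq] at hT
    have hTK : T = 306818341581107909568485747186642227685 := by
      rw [hT, Int.floor_eq_iff]
      constructor <;> norm_num
    exact cert_aux T 36220330374278104701 7957900065744827112145 3413720424492423386 (-4060110008754958863102) (by norm_num) (by norm_num) (by norm_num)
      (by norm_num) (by norm_num) (by norm_num) (by rw [hTK]; norm_num)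
      (by rw [hTK]; norm_num) (by norm_num) w hw0 hw2
  · have hs_eq : s = -177 := s_unique (by norm_num [pow_split_big]) (by norm_num [pow_split_big]) hs hs'
    rw [hs_eq] at hT
    have hTK : T = 191761463488192443480303591991651392303 := by
      rw [hT, Int.floor_eq_iff]
      constructor <;> norm_num
    exact cert_aux T 6561321989957136263 1501431094063728604873 1064475436110842036 (-26309688140454201158388) (by norm_num) (by norm_num) (by norm_num)
      (by norm_num) (by norm_num) (by norm_num) (by rw [hTK]; norm_num)
      (by rw [hTK]; norm_num) (by norm_num) w hw0 hw2
  · have hs_eq : s = -179 := s_unique (by norm_num [pow_split_big]) (by norm_num [pow_split_big]) hs hs'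
    rw [hs_eq] at hT
    have hTK : T = 239701829360240554350379489989564240379 := by
      rw [hT, Int.floor_eq_iff]
      constructor <;> norm_num
    exact cert_aux T 26245287959828545052 7513716792308600160628 4149688281196450165 (-5450311292495454723401) (by norm_num) (by norm_num) (by norm_num)
      (by norm_num) (by norm_num) (by norm_num) (by rw [hTK]; norm_num)
      (by rw [hTK]; norm_num) (by norm_num) w hw0 hw2
  · have hs_eq : s = -181 := s_unique (by norm_num [pow_split_big]) (by norm_num [pow_split_big]) hs hs'
    rw [hs_eq] at hT
    have hTK : T = 299627286700300692937974362486955300474 := by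
      rw [hT, Int.floor_eq_iff]
      constructor <;> norm_num
    exact cert_aux T 58300139513332120335 9260822253782787665702 1659875312478580066 (-2724740677419607716684) (by norm_num) (by norm_num) (by norm_num)
      (by norm_num) (by norm_num) (by norm_num) (by rw [hTK]; norm_num)
      (by rw [hTK]; norm_num) (by norm_num) w hw0 hw2
  · have hs_eq : s = -184 := s_unique (by norm_num [pow_split_big]) (by norm_num [pow_split_big]) hs hs'
    rw [hs_eq] at hT
    have hTK : T = 187267054187687933086233976554347062796 := by
      rw [hT, Int.floor_eq_iff]
      constructor <;> norm_num
    exact cert_aux T 11660027902666424067 1154687774747181852196 1618974597162216461 (-14781710912470177595748) (by norm_num) (by norm_num) (by norm_num)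
      (by norm_num) (by norm_num) (by norm_num) (by rw [hTK]; norm_num)
      (by rw [hTK]; norm_num) (by norm_num) w hw0 hw2
  · have hs_eq : s = -186 := s_unique (by norm_num [pow_split_big]) (by norm_num [pow_split_big]) hs hs'
    rw [hs_eq] at hT
    have hTK : T = 234083817734609916357792470692933828495 := by
      rw [hT, Int.floor_eq_iff]
      constructor <;> norm_num
    exact cert_aux T 1684415741668398229 7679527399921884260923 1422651163643671157 (-96947136762116540761509) (by norm_num) (by norm_num) (by norm_num)
      (by norm_num) (by norm_num) (by norm_num) (by rw [hTK]; norm_num)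
      (by rw [hTK]; norm_num) (by norm_num) w hw0 hw2
  · have hs_eq : s = -188 := s_unique (by norm_num [pow_split_big]) (by norm_num [pow_split_big]) hs hs'
    rw [hs_eq] at hT
    have hTK : T = 292604772168262395447240588366167285619 := by
      rw [hT, Int.floor_eq_iff]
      constructor <;> norm_num
    exact cert_aux T 10338671767134178191 7205589936317174055485 6969840283797381733 (-11994070771358370795937) (by norm_num) (by norm_num) (by norm_num)
      (by norm_num) (by norm_num) (by norm_num) (by rw [hTK]; norm_num)
      (by rw [hTK]; norm_num) (by norm_num) w hw0 hw2
  · have hs_eq : s = -191 := s_unique (by norm_num [pow_split_big]) (by norm_num [pow_split_big]) hs hs'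
    rw [hs_eq] at hT
    have hTK : T = 182877982605163997154525367728854553512 := by
      rw [hT, Int.floor_eq_iff]
      constructor <;> norm_num
    exact cert_aux T 5529436763613147623 302829817254948807832 232177317123788817 (-31495841094528772338136) (by norm_num) (by norm_num) (by norm_num)
      (by norm_num) (by norm_num) (by norm_num) (by rw [hTK]; norm_num)
      (by rw [hTK]; norm_num) (by norm_num) w hw0 hw2
  · have hs_eq : s = -193 := s_unique (by norm_num [pow_split_big]) (by norm_num [pow_split_big]) hs hs'
    rw [hs_eq] at hT
    have hTK : T = 228597478256454996443156709661068191890 := by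
      rw [hT, Int.floor_eq_iff]
      constructor <;> norm_num
    exact cert_aux T 11058873527226295246 757074543137372019580 7834082395907922199 (-15217968367068225755362) (by norm_num) (by norm_num) (by norm_num)
      (by norm_num) (by norm_num) (by norm_num) (by rw [hTK]; norm_num)
      (by rw [hTK]; norm_num) (by norm_num) w hw0 hw2
  · have hs_eq : s = -195 := s_unique (by norm_num [pow_split_big]) (by norm_num [pow_split_big]) hs hs'
    rw [hs_eq] at hT
    have hTK : T = 285746847820568745553945887076335239862 := by
      rw [hT, Int.floor_eq_iff]
      constructor <;> norm_num
    exact cert_aux T 40456902924278337495 7380367720207434363098 3778591184626843489 (-3617112751575026855690) (by norm_num) (by norm_num) (by norm_num)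
      (by norm_num) (by norm_num) (by norm_num) (by rw [hTK]; norm_num)
      (by rw [hTK]; norm_num) (by norm_num) w hw0 hw2
  · have hs_eq : s = -198 := s_unique (by norm_num [pow_split_big]) (by norm_num [pow_split_big]) hs hs'
    rw [hs_eq] at hT
    have hTK : T = 178591779887855465971216179422709524914 := by
      rw [hT, Int.floor_eq_iff]
      constructor <;> norm_num
    exact cert_aux T 16182761169711334998 1849137620344286424524 7022984153651706457 (-9963572097925083507998) (by norm_num) (by norm_num) (by norm_num)
      (by norm_num) (by norm_num) (by norm_num) (by rw [hTK]; norm_num)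
      (by rw [hTK]; norm_num) (by norm_num) w hw0 hw2
  · have hs_eq : s = -200 := s_unique (by norm_num [pow_split_big]) (by norm_num [pow_split_big]) hs hs'
    rw [hs_eq] at hT
    have hTK : T = 223239724859819332464020224278386906142 := by
      rw [hT, Int.floor_eq_iff]
      constructor <;> norm_num
    exact cert_aux T 2259313975693510125 8396118226628109088198 490084453142352164 (-75292662588735015005640) (by norm_num) (by norm_num) (by norm_num)
      (by norm_num) (by norm_num) (by norm_num) (by rw [hTK]; norm_num)
      (by rw [hTK]; norm_num) (by norm_num) w hw0 hw2
  · have hs_eq : s = -202 := s_unique (by norm_num [pow_split_big]) (by norm_num [pow_split_big]) hs hs'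
    rw [hs_eq] at hT
    have hTK : T = 279049656074774165580025280347983632678 := by
      rw [hT, Int.floor_eq_iff]
      constructor <;> norm_num
    exact cert_aux T 451862795138702025 2099255488054596623062 152886632014600556 (-384859354726987176816120) (by norm_num) (by norm_num) (by norm_num)
      (by norm_num) (by norm_num) (by norm_num) (by rw [hTK]; norm_num)
      (by rw [hTK]; norm_num) (by norm_num) w hw0 hw2
  · have hs_eq : s = -205 := s_unique (by norm_num [pow_split_big]) (by norm_num [pow_split_big]) hs hs'
    rw [hs_eq] at hT
    have hTK : T = 174406035046733853487515800217489770424 := by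
      rw [hT, Int.floor_eq_iff]
      constructor <;> norm_num
    exact cert_aux T 90372559027740405 262429529146581512984 48249788756179183 (-1927708051740577414548280) (by norm_num) (by norm_num) (by norm_num)
      (by norm_num) (by norm_num) (by norm_num) (by rw [hTK]; norm_num)
      (by rw [hTK]; norm_num) (by norm_num) w hw0 hw2
  · have hs_eq : s = -207 := s_unique (by norm_num [pow_split_big]) (by norm_num [pow_split_big]) hs hs'
    rw [hs_eq] at hT
    have hTK : T = 218007543808417316859394750271862213030 := by
      rw [hT, Int.floor_eq_iff]
      constructor <;> norm_num
    exact cert_aux T 36149023611096162 131214764573290756492 6127018484617961 (-4819598166262876763261930) (by norm_num) (by norm_num) (by norm_num)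
      (by norm_num) (by norm_num) (by norm_num) (by rw [hTK]; norm_num)
      (by rw [hTK]; norm_num) (by norm_num) w hw0 hw2
  · have hs_eq : s = -209 := s_unique (by norm_num [pow_split_big]) (by norm_num [pow_split_big]) hs hs'
    rw [hs_eq] at hT
    have hTK : T = 272509429760521646074243437839827766287 := by
      rw [hT, Int.floor_eq_iff]
      constructor <;> norm_num
    exact cert_aux T 144596094444384648 656001524819231590136 124132083974650543 (-1204341940882324692425663) (by norm_num) (by norm_num) (by norm_num)
      (by norm_num) (by norm_num) (by norm_num) (by rw [hTK]; norm_num)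
      (by rw [hTK]; norm_num) (by norm_num) w hw0 hw2
  · have hs_eq : s = -212 := s_unique (by norm_num [pow_split_big]) (by norm_num [pow_split_big]) hs hs'
    rw [hs_eq] at hT
    have hTK : T = 170318393600326028796402148649892353929 := by
      rw [hT, Int.floor_eq_iff]
      constructor <;> norm_num
    exact cert_aux T 1156768755555077184 3279573835812824796736 863483764572361067 (-148165060889232586674365) (by norm_num) (by norm_num) (by norm_num)
      (by norm_num) (by norm_num) (by norm_num) (by rw [hTK]; norm_num)
      (by rw [hTK]; norm_num) (by norm_num) w hw0 hw2
  · have hs_eq : s = -214 := s_unique (by norm_num [pow_split_big]) (by norm_num [pow_split_big]) hs hs'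
    rw [hs_eq] at hT
    have hTK : T = 212897992000407535995502685812365442412 := by
      rw [hT, Int.floor_eq_iff]
      constructor <;> norm_num
    exact cert_aux T 12203091810687274927 5602346962116591145172 7576016788466966191 (-10798992523214198070060) (by norm_num) (by norm_num) (by norm_num)
      (by norm_num) (by norm_num) (by norm_num) (by rw [hTK]; norm_num)
      (by rw [hTK]; norm_num) (by norm_num) w hw0 hw2
  · have hs_eq : s = -216 := s_unique (by norm_num [pow_split_big]) (by norm_num [pow_split_big]) hs hs'
    rw [hs_eq] at hT
    have hTK : T = 266122490000509419994378357265456803015 := by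
      rw [hT, Int.floor_eq_iff]
      constructor <;> norm_num
    exact cert_aux T 12203091810687274927 7002933702645738931465 1179576706498662982 (-13600166004272493642646) (by norm_num) (by norm_num) (by norm_num)
      (by norm_num) (by norm_num) (by norm_num) (by rw [hTK]; norm_num)
      (by rw [hTK]; norm_num) (by norm_num) w hw0 hw2
  · have hs_eq : s = -218 := s_unique (by norm_num [pow_split_big]) (by norm_num [pow_split_big]) hs hs'
    rw [hs_eq] at hT
    have hTK : T = 332653112500636774992972946581821003769 := by
      rw [hT, Int.floor_eq_iff]
      constructor <;> norm_num
    exact cert_aux T 17792074558861382687 2059457495065388243751 13382668517185937909 (-8243194709904146904499) (by norm_num) (by norm_num) (by norm_num)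
      (by norm_num) (by norm_num) (by norm_num) (by rw [hTK]; norm_num)
      (by rw [hTK]; norm_num) (by norm_num) w hw0 hw2
  · have hs_eq : s = -221 := s_unique (by norm_num [pow_split_big]) (by norm_num [pow_split_big]) hs hs'
    rw [hs_eq] at hT
    have hTK : T = 207908195312897984370608091613638127355 := by
      rw [hT, Int.floor_eq_iff]
      constructor <;> norm_num
    exact cert_aux T 8880592240214730986 3084977054858596641134 4563856433835048353 (-18033164360173157655845) (by norm_num) (by norm_num) (by norm_num)
      (by norm_num) (by norm_num) (by norm_num) (by rw [hTK]; norm_num)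
      (by rw [hTK]; norm_num) (by norm_num) w hw0 hw2
  · have hs_eq : s = -223 := s_unique (by norm_num [pow_split_big]) (by norm_num [pow_split_big]) hs hs'
    rw [hs_eq] at hT
    have hTK : T = 259885244141122480463260114517047659194 := by
      rw [hT, Int.floor_eq_iff]
      constructor <;> norm_num
    exact cert_aux T 48917393509417630139 6539706934828364333022 4465008182852902065 (-2964686310568277867878) (by norm_num) (by norm_num) (by norm_num)
      (by norm_num) (by norm_num) (by norm_num) (by rw [hTK]; norm_num)
      (by rw [hTK]; norm_num) (by norm_num) w hw0 hw2
  · have hs_eq : s = -225 := s_unique (by norm_num [pow_split_big]) (by norm_num [pow_split_big]) hs hs'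
    rw [hs_eq] at hT
    have hTK : T = 324856555176403100579075143146309573993 := by
      rw [hT, Int.floor_eq_iff]
      constructor <;> norm_num
    exact cert_aux T 224245626407929093772 9093167002799563268972 893001636570580413 (-740725076823784176763) (by norm_num) (by norm_num) (by norm_num)
      (by norm_num) (by norm_num) (by norm_num) (by rw [hTK]; norm_num)
      (by rw [hTK]; norm_num) (by norm_num) w hw0 hw2
  · have hs_eq : s = -228 := s_unique (by norm_num [pow_split_big]) (by norm_num [pow_split_big]) hs hs'
    rw [hs_eq] at hT
    have hTK : T = 203035346985251937861921964466443483745 := by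
      rw [hT, Int.floor_eq_iff]
      constructor <;> norm_num
    exact cert_aux T 34311705970052969881 6578048500694070606073 7144013092564643304 (-3708090392301773785880) (by norm_num) (by norm_num) (by norm_num)
      (by norm_num) (by norm_num) (by norm_num) (by rw [hTK]; norm_num)
      (by rw [hTK]; norm_num) (by norm_num) w hw0 hw2
  · have hs_eq : s = -230 := s_unique (by norm_num [pow_split_big]) (by norm_num [pow_split_big]) hs hs'
    rw [hs_eq] at hT
    have hTK : T = 253794183731564922327402455583054354682 := by
      rw [hT, Int.floor_eq_iff]
      constructor <;> norm_num
    exact cert_aux T 17729418345005924607 6800878635430194290950 15435156905088165941 (-3906047095600326902846) (by norm_num) (by norm_num) (by norm_num)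
      (by norm_num) (by norm_num) (by norm_num) (by rw [hTK]; norm_num)
      (by rw [hTK]; norm_num) (by norm_num) w hw0 hw2
  · have hs_eq : s = -232 := s_unique (by norm_num [pow_split_big]) (by norm_num [pow_split_big]) hs hs'
    rw [hs_eq] at hT
    have hTK : T = 317242729664456152909253069478817943352 := by
      rw [hT, Int.floor_eq_iff]
      constructor <;> norm_num
    exact cert_aux T 43343373969114093579 6020795281617792608104 2628179093034081455 (-3654557296204229064888) (by norm_num) (by norm_num) (by norm_num)
      (by norm_num) (by norm_num) (by norm_num) (by rw [hTK]; norm_num)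
      (by rw [hTK]; norm_num) (by norm_num) w hw0 hw2
  · have hs_eq : s = -235 := s_unique (by norm_num [pow_split_big]) (by norm_num [pow_split_big]) hs hs'
    rw [hs_eq] at hT
    have hTK : T = 198276706040285095568283168424261214595 := by
      rw [hT, Int.floor_eq_iff]
      constructor <;> norm_num
    exact cert_aux T 38087015783045930669 8331193671266406711175 4205086548854530328 (-3654557296204229064888) (by norm_num) (by norm_num) (by norm_num)
      (by norm_num) (by norm_num) (by norm_num) (by rw [hTK]; norm_num)
      (by rw [hTK]; norm_num) (by norm_num) w hw0 hw2
  · have hs_eq : s = -237 := s_unique (by norm_num [pow_split_big]) (by norm_num [pow_split_big]) hs hs'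
    rw [hs_eq] at hT
    have hTK : T = 247845882550356369460353960530326518244 := by
      rw [hT, Int.floor_eq_iff]
      constructor <;> norm_num
    exact cert_aux T 9299437776150998265 257844629158524894916 7520908419267123047 (-18526426023630815689028) (by norm_num) (by norm_num) (by norm_num)
      (by norm_num) (by norm_num) (by norm_num) (by rw [hTK]; norm_num)
      (by rw [hTK]; norm_num) (by norm_num) w hw0 hw2
  · have hs_eq : s = -239 := s_unique (by norm_num [pow_split_big]) (by norm_num [pow_split_big]) hs hs'
    rw [hs_eq] at hT
    have hTK : T = 309807353187945461825442450662908147805 := by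
      rw [hT, Int.floor_eq_iff]
      constructor <;> norm_num
    exact cert_aux T 7439550220920798612 257844629158524894916 81358198346324435 (-23415877158697044506201) (by norm_num) (by norm_num) (by norm_num)
      (by norm_num) (by norm_num) (by norm_num) (by rw [hTK]; norm_num)
      (by rw [hTK]; norm_num) (by norm_num) w hw0 hw2
  · have hs_eq : s = -242 := s_unique (by norm_num [pow_split_big]) (by norm_num [pow_split_big]) hs hs'
    rw [hs_eq] at hT
    have hTK : T = 193629595742465913640901531664317592378 := by
      rw [hT, Int.floor_eq_iff]
      constructor <;> norm_num
    exact cert_aux T 29741929244013929561 3567878476577941059370 32543279338529774 (-5853973357584178442772) (by norm_num) (by norm_num) (by norm_num)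
      (by norm_num) (by norm_num) (by norm_num) (by rw [hTK]; norm_num)
      (by rw [hTK]; norm_num) (by norm_num) w hw0 hw2
  · have hs_eq : s = -244 := s_unique (by norm_num [pow_split_big]) (by norm_num [pow_split_big]) hs hs'
    rw [hs_eq] at hT
    have hTK : T = 242036994678082392051126914580396990473 := by
      rw [hT, Int.floor_eq_iff]
      constructor <;> norm_num
    exact cert_aux T 214246029050783588116 8802135873390147557300 5954894504670491867 (-568546272999224099917) (by norm_num) (by norm_num) (by norm_num)
      (by norm_num) (by norm_num) (by norm_num) (by rw [hTK]; norm_num)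
      (by rw [hTK]; norm_num) (by norm_num) w hw0 hw2
  · have hs_eq : s = -246 := s_unique (by norm_num [pow_split_big]) (by norm_num [pow_split_big]) hs hs'
    rw [hs_eq] at hT
    have hTK : T = 302546243347602990063908643225496238091 := by
      rw [hT, Int.floor_eq_iff]
      constructor <;> norm_num
    exact cert_aux T 3546902079331471301 6890153995071302845815 2538165542693139662 (-44189610229928608066342) (by norm_num) (by norm_num) (by norm_num)
      (by norm_num) (by norm_num) (by norm_num) (by rw [hTK]; norm_num)
      (by rw [hTK]; norm_num) (by norm_num) w hw0 hw2
  · have hs_eq : s = -249 := s_unique (by norm_num [pow_split_big]) (by norm_num [pow_split_big]) hs hs'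
    rw [hs_eq] at hT
    have hTK : T = 189091402092251868789942902015935148807 := by
      rw [hT, Int.floor_eq_iff]
      constructor <;> norm_num
    exact cert_aux T 58279862275358348839 9365465899167123890193 8818450791606492727 (-1572338507910159791999) (by norm_num) (by norm_num) (by norm_num)
      (by norm_num) (by norm_num) (by norm_num) (by rw [hTK]; norm_num)
      (by rw [hTK]; norm_num) (by norm_num) w hw0 hw2
  · have hs_eq : s = -251 := s_unique (by norm_num [pow_split_big]) (by norm_num [pow_split_big]) hs hs'
    rw [hs_eq] at hT
    have hTK : T = 236364252615314835987428627519918936008 := by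
      rw [hT, Int.floor_eq_iff]
      constructor <;> norm_num
    exact cert_aux T 8128592138429072677 3121439284643039064040 2759434612709680200 (-20373905030497774694336) (by norm_num) (by norm_num) (by norm_num)
      (by norm_num) (by norm_num) (by norm_num) (by rw [hTK]; norm_num)
      (by rw [hTK]; norm_num) (by norm_num) w hw0 hw2
  · have hs_eq : s = -253 := s_unique (by norm_num [pow_split_big]) (by norm_num [pow_split_big]) hs hs'
    rw [hs_eq] at hT
    have hTK : T = 295455315769143544984285784399898670011 := by
      rw [hT, Int.floor_eq_iff]
      constructor <;> norm_num
    exact cert_aux T 84597242919542343010 8541730755210868602006 8680479060971008717 (-1182996672759673834817) (by norm_num) (by norm_num) (by norm_num)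
      (by norm_num) (by norm_num) (by norm_num) (by rw [hTK]; norm_num)
      (by rw [hTK]; norm_num) (by norm_num) w hw0 hw2
  · have hs_eq : s = -256 := s_unique (by norm_num [pow_split_big]) (by norm_num [pow_split_big]) hs hs'
    rw [hs_eq] at hT
    have hTK : T = 184659572355714715615178615249936668756 := by
      rw [hT, Int.floor_eq_iff]
      constructor <;> norm_num
    exact cert_aux T 7355950446870362221 6893577178937044892612 3532076304268390656 (-20374788049573841792000) (by norm_num) (by norm_num) (by norm_num)
      (by norm_num) (by norm_num) (by norm_num) (by rw [hTK]; norm_num)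
      (by rw [hTK]; norm_num) (by norm_num) w hw0 hw2
  · have hs_eq : s = -258 := s_unique (by norm_num [pow_split_big]) (by norm_num [pow_split_big]) hs hs'
    rw [hs_eq] at hT
    have hTK : T = 230824465444643394518973269062420835946 := by
      rw [hT, Int.floor_eq_iff]
      constructor <;> norm_num [pow_split_big]
    exact cert_aux T 7355950446870362221 8624327424118176477986 4296851132788784969 (-18647096903706791783878) (by norm_num) (by norm_num) (by norm_num)
      (by norm_num) (by norm_num) (by norm_num) (by rw [hTK]; norm_num)
      (by rw [hTK]; norm_num) (by norm_num) w hw0 hw2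
  · have hs_eq : s = -260 := s_unique (by norm_num [pow_split_big]) (by norm_num [pow_split_big]) hs hs'
    rw [hs_eq] at hT
    have hTK : T = 288530581805804243148716586328026044932 := by
      rw [hT, Int.floor_eq_iff]
      constructor <;> norm_num [pow_split_big]
    exact cert_aux T 9686510762802191659 8269873654869165675180 9322241263727317752 (-10027430600220478964768) (by norm_num) (by norm_num) (by norm_num)
      (by norm_num) (by norm_num) (by norm_num) (by rw [hTK]; norm_num)
      (by rw [hTK]; norm_num) (by norm_num) w hw0 hw2
  · have hs_eq : s = -263 := s_unique (by norm_num [pow_split_big]) (by norm_num [pow_split_big]) hs hs'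
    rw [hs_eq] at hT
    have hTK : T = 180331613628627651967947866455016278082 := by
      rw [hT, Int.floor_eq_iff]
      constructor <;> norm_num [pow_split_big]
    exact cert_aux T 45912420462930721712 6489360499286387024736 1791594352930488769 (-3541487654090230694974) (by norm_num) (by norm_num) (by norm_num)
      (by norm_num) (by norm_num) (by norm_num) (by rw [hTK]; norm_num)
      (by rw [hTK]; norm_num) (by norm_num) w hw0 hw2
  · have hs_eq : s = -265 := s_unique (by norm_num [pow_split_big]) (by norm_num [pow_split_big]) hs hs'
    rw [hs_eq] at hT
    have hTK : T = 225414517035784564959934833068770347603 := by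
      rw [hT, Int.floor_eq_iff]
      constructor <;> norm_num [pow_split_big]
    exact cert_aux T 8107527480827851081 4282509629129683702955 7166377411721955076 (-17703855081745292497332) (by norm_num) (by norm_num) (by norm_num)
      (by norm_num) (by norm_num) (by norm_num) (by rw [hTK]; norm_num)
      (by rw [hTK]; norm_num) (by norm_num) w hw0 hw2
  · have hs_eq : s = -267 := s_unique (by norm_num [pow_split_big]) (by norm_num [pow_split_big]) hs hs'
    rw [hs_eq] at hT
    have hTK : T = 281768146294730706199918541335962934504 := by
      rw [hT, Int.floor_eq_iff]
      constructor <;> norm_num [pow_split_big]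
    exact cert_aux T 188230013821179201 5496638235222199344872 54547546068581752 (-924001120785089040952128) (by norm_num) (by norm_num) (by norm_num)
      (by norm_num) (by norm_num) (by norm_num) (by rw [hTK]; norm_num)
      (by rw [hTK]; norm_num) (by norm_num) w hw0 hw2
  · have hs_eq : s = -270 := s_unique (by norm_num [pow_split_big]) (by norm_num [pow_split_big]) hs hs'
    rw [hs_eq] at hT
    have hTK : T = 176105091434206691374949088334976834065 := by
      rw [hT, Int.floor_eq_iff]
      constructor <;> norm_num [pow_split_big]
    exact cert_aux T 19194543934637191713 3223187421604042960433 12294415919568316606 (-7012272110967636934498) (by norm_num) (by norm_num) (by norm_num)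
      (by norm_num) (by norm_num) (by norm_num) (by rw [hTK]; norm_num)
      (by rw [hTK]; norm_num) (by norm_num) w hw0 hw2
  · have hs_eq : s = -272 := s_unique (by norm_num [pow_split_big]) (by norm_num [pow_split_big]) hs hs'
    rw [hs_eq] at hT
    have hTK : T = 220131364292758364218686360418721042581 := by
      rw [hT, Int.floor_eq_iff]
      constructor <;> norm_num [pow_split_big]
    exact cert_aux T 24413478324578405077 7387542645967839813113 3537740764813551621 (-6065885373817941828887) (by norm_num) (by norm_num) (by norm_num)
      (by norm_num) (by norm_num) (by norm_num) (by rw [hTK]; norm_num)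
      (by rw [hTK]; norm_num) (by norm_num) w hw0 hw2
  · have hs_eq : s = -274 := s_unique (by norm_num [pow_split_big]) (by norm_num [pow_split_big]) hs hs'
    rw [hs_eq] at hT
    have hTK : T = 275164205365947955273357950523401303227 := by
      rw [hT, Int.floor_eq_iff]
      constructor <;> norm_num [pow_split_big]
    exact cert_aux T 3467599358990260367 4882429047920173562997 280565623293165016 (-49848529838475962741560) (by norm_num) (by norm_num) (by norm_num)
      (by norm_num) (by norm_num) (by norm_num) (by rw [hTK]; norm_num)
      (by rw [hTK]; norm_num) (by norm_num) w hw0 hw2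
  · have hs_eq : s = -277 := s_unique (by norm_num [pow_split_big]) (by norm_num [pow_split_big]) hs hs'
    rw [hs_eq] at hT
    have hTK : T = 171977628353717472045848719077125814517 := by
      rw [hT, Int.floor_eq_iff]
      constructor <;> norm_num [pow_split_big]
    exact cert_aux T 67026812689882063072 8748997088152355272288 4910752227244997517 (-1958326968850937850383) (by norm_num) (by norm_num) (by norm_num)
      (by norm_num) (by norm_num) (by norm_num) (by rw [hTK]; norm_num)
      (by rw [hTK]; norm_num) (by norm_num) w hw0 hw2
  · have hs_eq : s = -279 := s_unique (by norm_num [pow_split_big]) (by norm_num [pow_split_big]) hs hs'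
    rw [hs_eq] at hT
    have hTK : T = 214972035442146840057310898846407268146 := by
      rw [hT, Int.floor_eq_iff]
      constructor <;> norm_num [pow_split_big]
    exact cert_aux T 19935671957809828705 7796586821575866417138 9821504454489995034 (-4898272798240967124716) (by norm_num) (by norm_num) (by norm_num)
      (by norm_num) (by norm_num) (by norm_num) (by rw [hTK]; norm_num)
      (by rw [hTK]; norm_num) (by norm_num) w hw0 hw2
  · have hs_eq : s = -281 := s_unique (by norm_num [pow_split_big]) (by norm_num [pow_split_big]) hs hs'
    rw [hs_eq] at hT
    have hTK : T = 268715044302683550071638623558009085182 := by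
      rw [hT, Int.floor_eq_iff]
      constructor <;> norm_num [pow_split_big]
    exact cert_aux T 15948537566247862964 7788612552792742485656 5834370062928029293 (-8074904888226639524826) (by norm_num) (by norm_num) (by norm_num)
      (by norm_num) (by norm_num) (by norm_num) (by rw [hTK]; norm_num)
      (by rw [hTK]; norm_num) (by norm_num) w hw0 hw2
  · have hs_eq : s = -283 := s_unique (by norm_num [pow_split_big]) (by norm_num [pow_split_big]) hs hs'
    rw [hs_eq] at hT
    have hTK : T = 335893805378354437589548279447511356478 := by
      rw [hT, Int.floor_eq_iff]
      constructor <;> norm_num [pow_split_big]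
    exact cert_aux T 5212541013913539327 5915638768959987893698 1243658098028979932 (-32012705388423646570168) (by norm_num) (by norm_num) (by norm_num)
      (by norm_num) (by norm_num) (by norm_num) (by rw [hTK]; norm_num)
      (by rw [hTK]; norm_num) (by norm_num) w hw0 hw2
  · have hs_eq : s = -286 := s_unique (by norm_num [pow_split_big]) (by norm_num [pow_split_big]) hs hs'
    rw [hs_eq] at hT
    have hTK : T = 209933628361471523493467674654694597799 := by
      rw [hT, Int.floor_eq_iff]
      constructor <;> norm_num [pow_split_big]
    exact cert_aux T 24475151903213872877 9010403901629857020059 3624987847559715569 (-5783905561784026253513) (by norm_num) (by norm_num) (by norm_num)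
      (by norm_num) (by norm_num) (by norm_num) (by rw [hTK]; norm_num)
      (by rw [hTK]; norm_num) (by norm_num) w hw0 hw2
  · have hs_eq : s = -288 := s_unique (by norm_num [pow_split_big]) (by norm_num [pow_split_big]) hs hs'
    rw [hs_eq] at hT
    have hTK : T = 262417035451839404366834593318368247248 := by
      rw [hT, Int.floor_eq_iff]
      constructor <;> norm_num [pow_split_big]
    exact cert_aux T 21755114231106927643 4656158394618507134192 3624987847559715569 (-7232600693115702603568) (by norm_num) (by norm_num) (by norm_num)
      (by norm_num) (by norm_num) (by norm_num) (by rw [hTK]; norm_num)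
      (by rw [hTK]; norm_num) (by norm_num) w hw0 hw2
  · have hs_eq : s = -290 := s_unique (by norm_num [pow_split_big]) (by norm_num [pow_split_big]) hs hs'
    rw [hs_eq] at hT
    have hTK : T = 328021294314799255458543241647960309061 := by
      rw [hT, Int.floor_eq_iff]
      constructor <;> norm_num [pow_split_big]
    exact cert_aux T 9427043261954714171 529356067292282630375 7249975695119431138 (-18074251757094137077782) (by norm_num) (by norm_num) (by norm_num)
      (by norm_num) (by norm_num) (by norm_num) (by rw [hTK]; norm_num)
      (by rw [hTK]; norm_num) (by norm_num) w hw0 hw2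
  · have hs_eq : s = -293 := s_unique (by norm_num [pow_split_big]) (by norm_num [pow_split_big]) hs hs'
    rw [hs_eq] at hT
    have hTK : T = 205013308946749534661589526029975193163 := by
      rw [hT, Int.floor_eq_iff]
      constructor <;> norm_num [pow_split_big]
    exact cert_aux T 17839504898252598721 5244197593688141311371 2029163251313659242 (-9169718540776553403890) (by norm_num) (by norm_num) (by norm_num)
      (by norm_num) (by norm_num) (by norm_num) (by rw [hTK]; norm_num)
      (by rw [hTK]; norm_num) (by norm_num) w hw0 hw2
  · have hs_eq : s = -295 := s_unique (by norm_num [pow_split_big]) (by norm_num [pow_split_big]) hs hs'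
    rw [hs_eq] at hT
    have hTK : T = 256266636183436918326986907537468991453 := by
      rw [hT, Int.floor_eq_iff]
      constructor <;> norm_num [pow_split_big]
    exact cert_aux T 2350403028862324199 8186575501732803637611 1065443918667664371 (-70414406698835118910009) (by norm_num) (by norm_num) (by norm_num)
      (by norm_num) (by norm_num) (by norm_num) (by rw [hTK]; norm_num)
      (by rw [hTK]; norm_num) (by norm_num) w hw0 hw2
  · have hs_eq : s = -297 := s_unique (by norm_num [pow_split_big]) (by norm_num [pow_split_big]) hs hs'
    rw [hs_eq] at hT
    have hTK : T = 320333295229296147908733634421836239317 := by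
      rw [hT, Int.floor_eq_iff]
      constructor <;> norm_num [pow_split_big]
    exact cert_aux T 13801523312829614137 4505574630487908491373 6067144836736643826 (-10642926485591596059302) (by norm_num) (by norm_num) (by norm_num)
      (by norm_num) (by norm_num) (by norm_num) (by rw [hTK]; norm_num)
      (by rw [hTK]; norm_num) (by norm_num) w hw0 hw2
  · have hs_eq : s = -300 := s_unique (by norm_num [pow_split_big]) (by norm_num [pow_split_big]) hs hs'
    rw [hs_eq] at hT
    have hTK : T = 200208309518310092442958521513647649573 := by
      rw [hT, Int.floor_eq_iff]
      constructor <;> norm_num [pow_split_big]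
    exact cert_aux T 14134970040700879434 6038145723008742773426 5733698108865378529 (-9876474215967243285627) (by norm_num) (by norm_num) (by norm_num)
      (by norm_num) (by norm_num) (by norm_num) (by rw [hTK]; norm_num)
      (by rw [hTK]; norm_num) (by norm_num) w hw0 hw2
  · have hs_eq : s = -302 := s_unique (by norm_num [pow_split_big]) (by norm_num [pow_split_big]) hs hs'
    rw [hs_eq] at hT
    have hTK : T = 250260386897887615553698151892059561966 := by
      rw [hT, Int.floor_eq_iff]
      constructor <;> norm_num [pow_split_big]
    exact cert_aux T 3360508772734200362 7956469842294809479436 3066124285895256153 (-44585226994709564601922) (by norm_num) (by norm_num) (by norm_num)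
      (by norm_num) (by norm_num) (by norm_num) (by rw [hTK]; norm_num)
      (by rw [hTK]; norm_num) (by norm_num) w hw0 hw2
  · have hs_eq : s = -304 := s_unique (by norm_num [pow_split_big]) (by norm_num [pow_split_big]) hs hs'
    rw [hs_eq] at hT
    have hTK : T = 312825483622359519442122689865074452458 := by
      rw [hT, Int.floor_eq_iff]
      constructor <;> norm_num [pow_split_big]
    exact cert_aux T 9291670768920183330 1581441864914106229012 7216488607911874271 (-17522372317138598555434) (by norm_num) (by norm_num) (by norm_num)
      (by norm_num) (by norm_num) (by norm_num) (by rw [hTK]; norm_num)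
      (by rw [hTK]; norm_num) (by norm_num) w hw0 hw2
  · have hs_eq : s = -307 := s_unique (by norm_num [pow_split_big]) (by norm_num [pow_split_big]) hs hs'
    rw [hs_eq] at hT
    have hTK : T = 195515927263974699651326681165671532786 := by
      rw [hT, Int.floor_eq_iff]
      constructor <;> norm_num [pow_split_big]
    exact cert_aux T 14866673230272293328 1577725196606538155680 14649825223048020935 (-10164424222060332987874) (by norm_num) (by norm_num) (by norm_num)
      (by norm_num) (by norm_num) (by norm_num) (by rw [hTK]; norm_num)
      (by rw [hTK]; norm_num) (by norm_num) w hw0 hw2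
  · have hs_eq : s = -309 := s_unique (by norm_num [pow_split_big]) (by norm_num [pow_split_big]) hs hs'
    rw [hs_eq] at hT
    have hTK : T = 244394909079968374564158351457089415983 := by
      rw [hT, Int.floor_eq_iff]
      constructor <;> norm_num [pow_split_big]
    exact cert_aux T 59466692921089173312 7918359329493235365056 2929965044609604187 (-2539641072992778444875) (by norm_num) (by norm_num) (by norm_num)
      (by norm_num) (by norm_num) (by norm_num) (by rw [hTK]; norm_num)
      (by rw [hTK]; norm_num) (by norm_num) w hw0 hw2
  · have hs_eq : s = -311 := s_unique (by norm_num [pow_split_big]) (by norm_num [pow_split_big]) hs hs'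
    rw [hs_eq] at hT
    have hTK : T = 305493636349960468205197939321361769978 := by
      rw [hT, Int.floor_eq_iff]
      constructor <;> norm_num [pow_split_big]
    exact cert_aux T 19684726105982223463 8388787997904493293462 5859930089219208374 (-6353497630048860518468) (by norm_num) (by norm_num) (by norm_num)
      (by norm_num) (by norm_num) (by norm_num) (by rw [hTK]; norm_num)
      (by rw [hTK]; norm_num) (by norm_num) w hw0 hw2
  · have hs_eq : s = -314 := s_unique (by norm_num [pow_split_big]) (by norm_num [pow_split_big]) hs hs'
    rw [hs_eq] at hT
    have hTK : T = 190933522718725292628248712075851106236 := by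
      rw [hT, Int.floor_eq_iff]
      constructor <;> norm_num [pow_split_big]
    exact cert_aux T 21277699291490984806 7874645981117712353512 4266956903710447031 (-6608975665256742227100) (by norm_num) (by norm_num) (by norm_num)
      (by norm_num) (by norm_num) (by norm_num) (by rw [hTK]; norm_num)
      (by rw [hTK]; norm_num) (by norm_num) w hw0 hw2
  · have hs_eq : s = -316 := s_unique (by norm_num [pow_split_big]) (by norm_num [pow_split_big]) hs hs'
    rw [hs_eq] at hT
    have hTK : T = 238666903398406615785310890094813882796 := by
      rw [hT, Int.floor_eq_iff]
      constructor <;> norm_num [pow_split_big]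
    exact cert_aux T 6804296955112215110 7248615120142339505416 5131765329864786507 (-20138212809405604426396) (by norm_num) (by norm_num) (by norm_num)
      (by norm_num) (by norm_num) (by norm_num) (by rw [hTK]; norm_num)
      (by rw [hTK]; norm_num) (by norm_num) w hw0 hw2
  · have hs_eq : s = -318 := s_unique (by norm_num [pow_split_big]) (by norm_num [pow_split_big]) hs hs'
    rw [hs_eq] at hT
    have hTK : T = 298333629248008269731638612618517353495 := by
      rw [hT, Int.floor_eq_iff]
      constructor <;> norm_num [pow_split_big]
    exact cert_aux T 5443437564089772088 7248615120142339505416 1049187156797457441 (-30609227351863760162057) (by norm_num) (by norm_num) (by norm_num)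
      (by norm_num) (by norm_num) (by norm_num) (by rw [hTK]; norm_num)
      (by rw [hTK]; norm_num) (by norm_num) w hw0 hw2
  · have hs_eq : s = -321 := s_unique (by norm_num [pow_split_big]) (by norm_num [pow_split_big]) hs hs'
    rw [hs_eq] at hT
    have hTK : T = 186458518280005168582274132886573345934 := by
      rw [hT, Int.floor_eq_iff]
      constructor <;> norm_num [pow_split_big]
    exact cert_aux T 17838675067806253658 6838233899168311625196 4984262345350292135 (-7856021795257246667614) (by norm_num) (by norm_num) (by norm_num)
      (by norm_num) (by norm_num) (by norm_num) (by rw [hTK]; norm_num)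
      (by rw [hTK]; norm_num) (by norm_num) w hw0 hw2
  · have hs_eq : s = -323 := s_unique (by norm_num [pow_split_big]) (by norm_num [pow_split_big]) hs hs'
    rw [hs_eq] at hT
    have hTK : T = 233073147850006460727842666108216682418 := by
      rw [hT, Int.floor_eq_iff]
      constructor <;> norm_num [pow_split_big]
    exact cert_aux T 40661612480962799451 7295888310089702128198 1993704938140116854 (-3927014045159553275380) (by norm_num) (by norm_num) (by norm_num)
      (by norm_num) (by norm_num) (by norm_num) (by rw [hTK]; norm_num)
      (by rw [hTK]; norm_num) (by norm_num) w hw0 hw2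
  · have hs_eq : s = -325 := s_unique (by norm_num [pow_split_big]) (by norm_num [pow_split_big]) hs hs'
    rw [hs_eq] at hT
    have hTK : T = 291341434812508075909803332635270853022 := by
      rw [hT, Int.floor_eq_iff]
      constructor <;> norm_num [pow_split_big]
    exact cert_aux T 8531063483820583261 837953034490626921574 7974819752560467416 (-19639057635674046610608) (by norm_num) (by norm_num) (by norm_num)
      (by norm_num) (by norm_num) (by norm_num) (by rw [hTK]; norm_num)
      (by rw [hTK]; norm_num) (by norm_num) w hw0 hw2
  · have hs_eq : s = -328 := s_unique (by norm_num [pow_split_big]) (by norm_num [pow_split_big]) hs hs'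
    rw [hs_eq] at hT
    have hTK : T = 182088396757817547443627082897044283139 := by
      rw [hT, Int.floor_eq_iff]
      constructor <;> norm_num [pow_split_big]
    exact cert_aux T 222497492504046338 5119308291914294394630 193386328415266499 (-778591100867219507293879) (by norm_num) (by norm_num) (by norm_num)
      (by norm_num) (by norm_num) (by norm_num) (by rw [hTK]; norm_num)
      (by rw [hTK]; norm_num) (by norm_num) w hw0 hw2
  · have hs_eq : s = -330 := s_unique (by norm_num [pow_split_big]) (by norm_num [pow_split_big]) hs hs'
    rw [hs_eq] at hT
    have hTK : T = 227610495947271934304533853621305353923 := by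
      rw [hT, Int.floor_eq_iff]
      constructor <;> norm_num [pow_split_big]
    exact cert_aux T 980464539414089109752 8436535190127569976552 6802601037806061975 (-119162074840044374011) (by norm_num) (by norm_num) (by norm_num)
      (by norm_num) (by norm_num) (by norm_num) (by rw [hTK]; norm_num)
      (by rw [hTK]; norm_num) (by norm_num) w hw0 hw2
  · have hs_eq : s = -332 := s_unique (by norm_num [pow_split_big]) (by norm_num [pow_split_big]) hs hs'
    rw [hs_eq] at hT
    have hTK : T = 284513119934089917880667317026631692404 := by
      rw [hT, Int.floor_eq_iff]
      constructor <;> norm_num [pow_split_big]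
    exact cert_aux T 5744955235788381048308 3699619688170079851152 1360520207561212395 (-29450388658120790404) (by norm_num) (by norm_num) (by norm_num)
      (by norm_num) (by norm_num) (by norm_num) (by rw [hTK]; norm_num)
      (by rw [hTK]; norm_num) (by norm_num) w hw0 hw2
  · have hs_eq : s = -335 := s_unique (by norm_num [pow_split_big]) (by norm_num [pow_split_big]) hs hs'
    rw [hs_eq] at hT
    have hTK : T = 177820699958806198675417073141644807753 := by
      rw [hT, Int.floor_eq_iff]
      constructor <;> norm_num [pow_split_big]
    exact cert_aux T 5869306782759475861211 3564562244390887685747 2176832332097939832 (-28361972492071820488) (by norm_num) (by norm_num) (by norm_num)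
      (by norm_num) (by norm_num) (by norm_num) (by rw [hTK]; norm_num)
      (by rw [hTK]; norm_num) (by norm_num) w hw0 hw2
  · have hs_eq : s = -337 := s_unique (by norm_num [pow_split_big]) (by norm_num [pow_split_big]) hs hs'
    rw [hs_eq] at hT
    have hTK : T = 222275874948507748344271341427056009691 := by
      rw [hT, Int.floor_eq_iff]
      constructor <;> norm_num [pow_split_big]
    exact cert_aux T 687121647094795825807 8646531460858096791381 8707329328391759328 (-143986694792457042272) (by norm_num) (by norm_num) (by norm_num)
      (by norm_num) (by norm_num) (by norm_num) (by rw [hTK]; norm_num)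
      (by rw [hTK]; norm_num) (by norm_num) w hw0 hw2
  · have hs_eq : s = -339 := s_unique (by norm_num [pow_split_big]) (by norm_num [pow_split_big]) hs hs'
    rw [hs_eq] at hT
    have hTK : T = 277844843685634685430339176783820012114 := by
      rw [hT, Int.floor_eq_iff]
      constructor <;> norm_num [pow_split_big]
    exact cert_aux T 34526369374305772870 9299438293112392797292 151473969630632221 (-5005332218873143124662) (by norm_num) (by norm_num) (by norm_num)
      (by norm_num) (by norm_num) (by norm_num) (by rw [hTK]; norm_num)
      (by rw [hTK]; norm_num) (by norm_num) w hw0 hw2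
  · have hs_eq : s = -342 := s_unique (by norm_num [pow_split_big]) (by norm_num [pow_split_big]) hs hs'
    rw [hs_eq] at hT
    have hTK : T = 173653027303521678393961985489887507571 := by
      rw [hT, Int.floor_eq_iff]
      constructor <;> norm_num [pow_split_big]
    exact cert_aux T 55242190998889236592 9285627745362670488144 7056747844491786795 (-1967667037117788299951) (by norm_num) (by norm_num) (by norm_num)
      (by norm_num) (by norm_num) (by norm_num) (by rw [hTK]; norm_num)
      (by rw [hTK]; norm_num) (by norm_num) w hw0 hw2
  · have hs_eq : s = -344 := s_unique (by norm_num [pow_split_big]) (by norm_num [pow_split_big]) hs hs'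
    rw [hs_eq] at hT
    have hTK : T = 217066284129402097992452481862359384464 := by
      rw [hT, Int.floor_eq_iff]
      constructor <;> norm_num [pow_split_big]
    exact cert_aux T 151413519495830836595 8986336724176668754864 2822699137796714718 (-983127843774444971296) (by norm_num) (by norm_num) (by norm_num)
      (by norm_num) (by norm_num) (by norm_num) (by rw [hTK]; norm_num)
      (by rw [hTK]; norm_num) (by norm_num) w hw0 hw2
  · have hs_eq : s = -346 := s_unique (by norm_num [pow_split_big]) (by norm_num [pow_split_big]) hs hs'
    rw [hs_eq] at hT
    have hTK : T = 271332855161752622490565602327949230580 := by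
      rw [hT, Int.floor_eq_iff]
      constructor <;> norm_num [pow_split_big]
    exact cert_aux T 24637305623572737883 4704403790480279616956 11290796551186858872 (-4915639218872224856480) (by norm_num) (by norm_num) (by norm_num)
      (by norm_num) (by norm_num) (by norm_num) (by rw [hTK]; norm_num)
      (by rw [hTK]; norm_num) (by norm_num) w hw0 hw2
  · have hs_eq : s = -348 := s_unique (by norm_num [pow_split_big]) (by norm_num [pow_split_big]) hs hs'
    rw [hs_eq] at hT
    have hTK : T = 339166068952190778113207002909936538225 := by
      rw [hT, Int.floor_eq_iff]
      constructor <;> norm_num [pow_split_big]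
    exact cert_aux T 2333277177764337869693 7098464394927655711789 7185620434951919351 (-52808857097986309881) (by norm_num) (by norm_num) (by norm_num)
      (by norm_num) (by norm_num) (by norm_num) (by rw [hTK]; norm_num)
      (by rw [hTK]; norm_num) (by norm_num) w hw0 hw2
  · have hs_eq : s = -351 := s_unique (by norm_num [pow_split_big]) (by norm_num [pow_split_big]) hs hs'
    rw [hs_eq] at hT
    have hTK : T = 211978793095119236320754376818710336390 := by
      rw [hT, Int.floor_eq_iff]
      constructor <;> norm_num [pow_split_big]
    exact cert_aux T 26485572214802925781 5923361219701332291198 2256909525004751623 (-6073347413533677864278) (by norm_num) (by norm_num) (by norm_num)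
      (by norm_num) (by norm_num) (by norm_num) (by rw [hTK]; norm_num)
      (by rw [hTK]; norm_num) (by norm_num) w hw0 hw2
  · have hs_eq : s = -353 := s_unique (by norm_num [pow_split_big]) (by norm_num [pow_split_big]) hs hs'
    rw [hs_eq] at hT
    have hTK : T = 264973491368899045400942971023387920488 := by
      rw [hT, Int.floor_eq_iff]
      constructor <;> norm_num [pow_split_big]
    exact cert_aux T 4394350632958684507 4519711187008651347192 238936834101637478 (-39401645622635682512528) (by norm_num) (by norm_num) (by norm_num)
      (by norm_num) (by norm_num) (by norm_num) (by rw [hTK]; norm_num)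
      (by rw [hTK]; norm_num) (by norm_num) w hw0 hw2
  · have hs_eq : s = -355 := s_unique (by norm_num [pow_split_big]) (by norm_num [pow_split_big]) hs hs'
    rw [hs_eq] at hT
    have hTK : T = 331216864211123806751178713779234900610 := by
      rw [hT, Int.floor_eq_iff]
      constructor <;> norm_num [pow_split_big]
    exact cert_aux T 68934168808718098274 9331076901397336245188 15036366885700182315 (-492050266531073030698) (by norm_num) (by norm_num) (by norm_num)
      (by norm_num) (by norm_num) (by norm_num) (by rw [hTK]; norm_num)
      (by rw [hTK]; norm_num) (by norm_num) w hw0 hw2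
  · have hs_eq : s = -358 := s_unique (by norm_num [pow_split_big]) (by norm_num [pow_split_big]) hs hs'
    rw [hs_eq] at hT
    have hTK : T = 207010540131952379219486696112021812881 := by
      rw [hT, Int.floor_eq_iff]
      constructor <;> norm_num [pow_split_big]
    exact cert_aux T 267181092834457764457 8952280670933538325369 12029093508560145852 (-249032406642676551812) (by norm_num) (by norm_num) (by norm_num)
      (by norm_num) (by norm_num) (by norm_num) (by rw [hTK]; norm_num)
      (by rw [hTK]; norm_num) (by norm_num) w hw0 hw2
  · have hs_eq : s = -360 := s_unique (by norm_num [pow_split_big]) (by norm_num [pow_split_big]) hs hs'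
    rw [hs_eq] at hT
    have hTK : T = 258763175164940474024358370140027266101 := by
      rw [hT, Int.floor_eq_iff]
      constructor <;> norm_num [pow_split_big]
    exact cert_aux T 14943119339499086165 3230464014469216017049 3287016015743324913 (-10948583170129590956059) (by norm_num) (by norm_num) (by norm_num)
      (by norm_num) (by norm_num) (by norm_num) (by rw [hTK]; norm_num)
      (by rw [hTK]; norm_num) (by norm_num) w hw0 hw2
  · have hs_eq : s = -362 := s_unique (by norm_num [pow_split_big]) (by norm_num [pow_split_big]) hs hs'
    rw [hs_eq] at hT
    have hTK : T = 323453968956175592530447962675034082627 := by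
      rw [hT, Int.floor_eq_iff]
      constructor <;> norm_num [pow_split_big]
    exact cert_aux T 11954495471599268932 3239429886072915468748 9264263751542959379 (-12063548757613723467015) (by norm_num) (by norm_num) (by norm_num)
      (by norm_num) (by norm_num) (by norm_num) (by rw [hTK]; norm_num)
      (by rw [hTK]; norm_num) (by norm_num) w hw0 hw2
  · have hs_eq : s = -365 := s_unique (by norm_num [pow_split_big]) (by norm_num [pow_split_big]) hs hs'
    rw [hs_eq] at hT
    have hTK : T = 202158730597609745331529976671896301642 := by
      rw [hT, Int.floor_eq_iff]
      constructor <;> norm_num [pow_split_big]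
    exact cert_aux T 2928945438331115697 2318167184399735690026 1909709746198449152 (-57972245974955365468160) (by norm_num) (by norm_num) (by norm_num)
      (by norm_num) (by norm_num) (by norm_num) (by rw [hTK]; norm_num)
      (by rw [hTK]; norm_num) (by norm_num) w hw0 hw2
  · have hs_eq : s = -367 := s_unique (by norm_num [pow_split_big]) (by norm_num [pow_split_big]) hs hs'
    rw [hs_eq] at hT
    have hTK : T = 252698413247012181664412470839870377052 := by
      rw [hT, Int.floor_eq_iff]
      constructor <;> norm_num [pow_split_big]
    exact cert_aux T 23227716368222392267 8097454695974470414580 11511934614897929479 (-3487523335147545804156) (by norm_num) (by norm_num) (by norm_num)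
      (by norm_num) (by norm_num) (by norm_num) (by rw [hTK]; norm_num)
      (by rw [hTK]; norm_num) (by norm_num) w hw0 hw2
  · have hs_eq : s = -369 := s_unique (by norm_num [pow_split_big]) (by norm_num [pow_split_big]) hs hs'
    rw [hs_eq] at hT
    have hTK : T = 315873016558765227080515588549837971315 := by
      rw [hT, Int.floor_eq_iff]
      constructor <;> norm_num [pow_split_big]
    exact cert_aux T 9250317119603650245 280602006419844701567 9046469981177116936 (-18560024701417107827048) (by norm_num) (by norm_num) (by norm_num)
      (by norm_num) (by norm_num) (by norm_num) (by rw [hTK]; norm_num)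
      (by rw [hTK]; norm_num) (by norm_num) w hw0 hw2
  · have hs_eq : s = -372 := s_unique (by norm_num [pow_split_big]) (by norm_num [pow_split_big]) hs hs'
    rw [hs_eq] at hT
    have hTK : T = 197420635349228266925322242843648732072 := by
      rw [hT, Int.floor_eq_iff]
      constructor <;> norm_num [pow_split_big]
    exact cert_aux T 7400253695682920196 141226034921882715808 1442369147067663431 (-23515527837850326615144) (by norm_num) (by norm_num) (by norm_num)
      (by norm_num) (by norm_num) (by norm_num) (by rw [hTK]; norm_num)
      (by rw [hTK]; norm_num) (by norm_num) w hw0 hw2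
  · have hs_eq : s = -374 := s_unique (by norm_num [pow_split_big]) (by norm_num [pow_split_big]) hs hs'
    rw [hs_eq] at hT
    have hTK : T = 246775794186535333656652803554560915090 := by
      rw [hT, Int.floor_eq_iff]
      constructor <;> norm_num [pow_split_big]
    exact cert_aux T 1191576909723051353 5914188468193052332738 1003168949378448312 (-141234393062023842406672) (by norm_num) (by norm_num) (by norm_num)
      (by norm_num) (by norm_num) (by norm_num) (by rw [hTK]; norm_num)
      (by rw [hTK]; norm_num) (by norm_num) w hw0 hw2
  · have hs_eq : s = -376 := s_unique (by norm_num [pow_split_big]) (by norm_num [pow_split_big]) hs hs'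
    rw [hs_eq] at hT
    have hTK : T = 308469742733169167070816004443201143863 := by
      rw [hT, Int.floor_eq_iff]
      constructor <;> norm_num [pow_split_big]
    exact cert_aux T 30792591692454732137 8290794599349309755791 5205256810712505345 (-4256506179087079602121) (by norm_num) (by norm_num) (by norm_num)
      (by norm_num) (by norm_num) (by norm_num) (by rw [hTK]; norm_num)
      (by rw [hTK]; norm_num) (by norm_num) w hw0 hw2
  · have hs_eq : s = -379 := s_unique (by norm_num [pow_split_big]) (by norm_num [pow_split_big]) hs hs'
    rw [hs_eq] at hT
    have hTK : T = 192793589208230729419260002777000714914 := by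
      rw [hT, Int.floor_eq_iff]
      constructor <;> norm_num [pow_split_big]
    exact cert_aux T 147114548099096453135 8434363277960759363454 2082102724285002138 (-1064907333293376776332) (by norm_num) (by norm_num) (by norm_num)
      (by norm_num) (by norm_num) (by norm_num) (by rw [hTK]; norm_num)
      (by rw [hTK]; norm_num) (by norm_num) w hw0 hw2
  · have hs_eq : s = -381 := s_unique (by norm_num [pow_split_big]) (by norm_num [pow_split_big]) hs hs'
    rw [hs_eq] at hT
    have hTK : T = 240991986510288411774075003471250893643 := by
      rw [hT, Int.floor_eq_iff]
      constructor <;> norm_num [pow_split_big]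
    exact cert_aux T 23176601446964284213 6113581620063834894215 8328410897140008552 (-5320372461018313877384) (by norm_num) (by norm_num) (by norm_num)
      (by norm_num) (by norm_num) (by norm_num) (by rw [hTK]; norm_num)
      (by rw [hTK]; norm_num) (by norm_num) w hw0 hw2
  · have hs_eq : s = -383 := s_unique (by norm_num [pow_split_big]) (by norm_num [pow_split_big]) hs hs'
    rw [hs_eq] at hT
    have hTK : T = 301239983137860514717593754339063617053 := by
      rw [hT, Int.floor_eq_iff]
      constructor <;> norm_num [pow_split_big]
    exact cert_aux T 23176601446964284213 7624594573994570404609 2027408428319149999 (-6850288422355511963437) (by norm_num) (by norm_num) (by norm_num)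
      (by norm_num) (by norm_num) (by norm_num) (by rw [hTK]; norm_num)
      (by rw [hTK]; norm_num) (by norm_num) w hw0 hw2
  · have hs_eq : s = -386 := s_unique (by norm_num [pow_split_big]) (by norm_num [pow_split_big]) hs hs'
    rw [hs_eq] at hT
    have hTK : T = 188274989461162821698496096461914760658 := by
      rw [hT, Int.floor_eq_iff]
      constructor <;> norm_num [pow_split_big]
    exact cert_aux T 7648713836130393686 5330336765446882283660 4285276795211403153 (-19791903142826380625422) (by norm_num) (by norm_num) (by norm_num)
      (by norm_num) (by norm_num) (by norm_num) (by rw [hTK]; norm_num)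
      (by rw [hTK]; norm_num) (by norm_num) w hw0 hw2
  · have hs_eq : s = -388 := s_unique (by norm_num [pow_split_big]) (by norm_num [pow_split_big]) hs hs'
    rw [hs_eq] at hT
    have hTK : T = 235343736826453527123120120577393450823 := by
      rw [hT, Int.floor_eq_iff]
      constructor <;> norm_num [pow_split_big]
    exact cert_aux T 61927182492477079584 8420188194615417841888 3916540893494438105 (-2280849132536406795473) (by norm_num) (by norm_num) (by norm_num)
      (by norm_num) (by norm_num) (by norm_num) (by rw [hTK]; norm_num)
      (by rw [hTK]; norm_num) (by norm_num) w hw0 hw2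
  · have hs_eq : s = -390 := s_unique (by norm_num [pow_split_big]) (by norm_num [pow_split_big]) hs hs'
    rw [hs_eq] at hT
    have hTK : T = 294179671033066908903900150721741813529 := by
      rw [hT, Int.floor_eq_iff]
      constructor <;> norm_num [pow_split_big]
    exact cert_aux T 293140604334443800354 9101913702382801625170 783308178698887621 (-570016456089426976963) (by norm_num) (by norm_num) (by norm_num)
      (by norm_num) (by norm_num) (by norm_num) (by rw [hTK]; norm_num)
      (by rw [hTK]; norm_num) (by norm_num) w hw0 hw2
  · have hs_eq : s = -393 := s_unique (by norm_num [pow_split_big]) (by norm_num [pow_split_big]) hs hs'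
    rw [hs_eq] at hT
    have hTK : T = 183862294395666818064937594201088633455 := by
      rw [hT, Int.floor_eq_iff]
      constructor <;> norm_num [pow_split_big]
    exact cert_aux T 468711643663630525518 8951473039115389290962 783308178698887621 (-356749852667578665365) (by norm_num) (by norm_num) (by norm_num)
      (by norm_num) (by norm_num) (by norm_num) (by rw [hTK]; norm_num)
      (by rw [hTK]; norm_num) (by norm_num) w hw0 hw2
  · have hs_eq : s = -395 := s_unique (by norm_num [pow_split_big]) (by norm_num [pow_split_big]) hs hs'
    rw [hs_eq] at hT
    have hTK : T = 229827867994583522581171992751360791819 := by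
      rw [hT, Int.floor_eq_iff]
      constructor <;> norm_num [pow_split_big]
    exact cert_aux T 179494914042723556473 9069170869580003518003 1566616357397775242 (-891482977579597219602) (by norm_num) (by norm_num) (by norm_num)
      (by norm_num) (by norm_num) (by norm_num) (by rw [hTK]; norm_num)
      (by rw [hTK]; norm_num) (by norm_num) w hw0 hw2
  · have hs_eq : s = -397 := s_unique (by norm_num [pow_split_big]) (by norm_num [pow_split_big]) hs hs'
    rw [hs_eq] at hT
    have hTK : T = 287284834993229403226464990939200989774 := by
      rw [hT, Int.floor_eq_iff]
      constructor <;> norm_num [pow_split_big]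
    exact cert_aux T 31512457007830940617 5395361253175548883262 6266465429591100968 (-4455848271540588322768) (by norm_num) (by norm_num) (by norm_num)
      (by norm_num) (by norm_num) (by norm_num) (by rw [hTK]; norm_num)
      (by rw [hTK]; norm_num) (by norm_num) w hw0 hw2
  · have hs_eq : s = -400 := s_unique (by norm_num [pow_split_big]) (by norm_num [pow_split_big]) hs hs'
    rw [hs_eq] at hT
    have hTK : T = 179553021870768377016540619337000618609 := by
      rw [hT, Int.floor_eq_iff]
      constructor <;> norm_num [pow_split_big]
    exact cert_aux T 15111568974968816634 238656137652482344282 2398508255911178921 (-11491338419900603222375) (by norm_num) (by norm_num) (by norm_num)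
      (by norm_num) (by norm_num) (by norm_num) (by rw [hTK]; norm_num)
      (by rw [hTK]; norm_num) (by norm_num) w hw0 hw2
  · have hs_eq : s = -402 := s_unique (by norm_num [pow_split_big]) (by norm_num [pow_split_big]) hs hs'
    rw [hs_eq] at hT
    have hTK : T = 224441277338460471270675774171250773261 := by
      rw [hT, Int.floor_eq_iff]
      constructor <;> norm_num [pow_split_big]
    exact cert_aux T 19717091611409635935 9031222782914444110291 7004030892351998222 (-5628092148847148438602) (by norm_num) (by norm_num) (by norm_num)
      (by norm_num) (by norm_num) (by norm_num) (by rw [hTK]; norm_num)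
      (by rw [hTK]; norm_num) (by norm_num) w hw0 hw2
  · have hs_eq : s = -404 := s_unique (by norm_num [pow_split_big]) (by norm_num [pow_split_big]) hs hs'
    rw [hs_eq] at hT
    have hTK : T = 280551596673075589088344717714063466576 := by
      rw [hT, Int.floor_eq_iff]
      constructor <;> norm_num [pow_split_big]
    exact cert_aux T 15773673289127708748 9027279364592162183104 10947449214633925409 (-4780046352633983002032) (by norm_num) (by norm_num) (by norm_num)
      (by norm_num) (by norm_num) (by norm_num) (by rw [hTK]; norm_num)
      (by rw [hTK]; norm_num) (by norm_num) w hw0 hw2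
  · have hs_eq : s = -407 := s_unique (by norm_num [pow_split_big]) (by norm_num [pow_split_big]) hs hs'
    rw [hs_eq] at hT
    have hTK : T = 175344747920672243180215448571289666610 := by
      rw [hT, Int.floor_eq_iff]
      constructor <;> norm_num [pow_split_big]
    exact cert_aux T 4826224074493783339 8629578573266340740710 141512075236660634 (-35846529216392809668588) (by norm_num) (by norm_num) (by norm_num)
      (by norm_num) (by norm_num) (by norm_num) (by rw [hTK]; norm_num)
      (by rw [hTK]; norm_num) (by norm_num) w hw0 hw2
  · have hs_eq : s = -409 := s_unique (by norm_num [pow_split_big]) (by norm_num [pow_split_big]) hs hs'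
    rw [hs_eq] at hT
    have hTK : T = 219180934900840303975269310714112083263 := by
      rw [hT, Int.floor_eq_iff]
      constructor <;> norm_num [pow_split_big]
    exact cert_aux T 24272632447705577329 9138840878647470332367 15557126698569435192 (-1320436359978161988152) (by norm_num) (by norm_num) (by norm_num)
      (by norm_num) (by norm_num) (by norm_num) (by rw [hTK]; norm_num)
      (by rw [hTK]; norm_num) (by norm_num) w hw0 hw2
  · have hs_eq : s = -411 := s_unique (by norm_num [pow_split_big]) (by norm_num [pow_split_big]) hs hs'
    rw [hs_eq] at hT
    have hTK : T = 273976168626050379969086638392640104078 := by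
      rw [hT, Int.floor_eq_iff]
      constructor <;> norm_num [pow_split_big]
    exact cert_aux T 27009280827478894551 5513437338386831590210 2736648379773317222 (-5891909285586727142252) (by norm_num) (by norm_num) (by norm_num)
      (by norm_num) (by norm_num) (by norm_num) (by rw [hTK]; norm_num)
      (by rw [hTK]; norm_num) (by norm_num) w hw0 hw2
  · have hs_eq : s = -414 := s_unique (by norm_num [pow_split_big]) (by norm_num [pow_split_big]) hs hs'
    rw [hs_eq] at hT
    have hTK : T = 171235105391281487480679148995400065049 := by
      rw [hT, Int.floor_eq_iff]
      constructor <;> norm_num [pow_split_big]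
    exact cert_aux T 34529015102742471705 9251821889054208616049 12993031034810211598 (-1564347050437953120674) (by norm_num) (by norm_num) (by norm_num)
      (by norm_num) (by norm_num) (by norm_num) (by rw [hTK]; norm_num)
      (by rw [hTK]; norm_num) (by norm_num) w hw0 hw2
  · have hs_eq : s = -416 := s_unique (by norm_num [pow_split_big]) (by norm_num [pow_split_big]) hs hs'
    rw [hs_eq] at hT
    have hTK : T = 214043881739101859350848936244250081311 := by
      rw [hT, Int.floor_eq_iff]
      constructor <;> norm_num [pow_split_big]
    exact cert_aux T 7724378026835271425 8892369135331389045023 4450078001688163089 (-17432191319960507013361) (by norm_num) (by norm_num) (by norm_num)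
      (by norm_num) (by norm_num) (by norm_num) (by rw [hTK]; norm_num)
      (by rw [hTK]; norm_num) (by norm_num) w hw0 hw2
  · have hs_eq : s = -418 := s_unique (by norm_num [pow_split_big]) (by norm_num [pow_split_big]) hs hs'
    rw [hs_eq] at hT
    have hTK : T = 267554852173877324188561170305312601639 := by
      rw [hT, Int.floor_eq_iff]
      constructor <;> norm_num [pow_split_big]
    exact cert_aux T 6179502421468217140 8893914010936756099308 4450078001688163089 (-21789126630450211725929) (by norm_num) (by norm_num) (by norm_num)
      (by norm_num) (by norm_num) (by norm_num) (by rw [hTK]; norm_num)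
      (by rw [hTK]; norm_num) (by norm_num) w hw0 hw2
  · have hs_eq : s = -420 := s_unique (by norm_num [pow_split_big]) (by norm_num [pow_split_big]) hs hs'
    rw [hs_eq] at hT
    have hTK : T = 334443565217346655235701462881640752049 := by
      rw [hT, Int.floor_eq_iff]
      constructor <;> norm_num [pow_split_big]
    exact cert_aux T 4943601937174573712 8895149911421049742736 742376548807232805 (-33906658202128129923691) (by norm_num) (by norm_num) (by norm_num)
      (by norm_num) (by norm_num) (by norm_num) (by rw [hTK]; norm_num)
      (by rw [hTK]; norm_num) (by norm_num) w hw0 hw2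
  · have hs_eq : s = -423 := s_unique (by norm_num [pow_split_big]) (by norm_num [pow_split_big]) hs hs'
    rw [hs_eq] at hT
    have hTK : T = 209027228260841659522313414301025470030 := by
      rw [hT, Int.floor_eq_iff]
      constructor <;> norm_num [pow_split_big]
    exact cert_aux T 10184154493872040546 2635907742185609672156 5685978485981806517 (-15635746418245663742170) (by norm_num) (by norm_num) (by norm_num)
      (by norm_num) (by norm_num) (by norm_num) (by rw [hTK]; norm_num)
      (by rw [hTK]; norm_num) (by norm_num) w hw0 hw2
  · have hs_eq : s = -425 := s_unique (by norm_num [pow_split_big]) (by norm_num [pow_split_big]) hs hs'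
    rw [hs_eq] at hT
    have hTK : T = 261284035326052074402891767876281837538 := by
      rw [hT, Int.floor_eq_iff]
      constructor <;> norm_num [pow_split_big]
    exact cert_aux T 13120620594224495461 8528335463683345109546 1374756192814675801 (-12385099371134242886766) (by norm_num) (by norm_num) (by norm_num)
      (by norm_num) (by norm_num) (by norm_num) (by rw [hTK]; norm_num)
      (by rw [hTK]; norm_num) (by norm_num) w hw0 hw2
  · have hs_eq : s = -427 := s_unique (by norm_num [pow_split_big]) (by norm_num [pow_split_big]) hs hs'
    rw [hs_eq] at hT
    have hTK : T = 326605044157565093003614709845352296923 := by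
      rw [hT, Int.floor_eq_iff]
      constructor <;> norm_num [pow_split_big]
    exact cert_aux T 16844549667321135194 415826099224435345150 3723929073096639733 (-10251153540676858289513) (by norm_num) (by norm_num) (by norm_num)
      (by norm_num) (by norm_num) (by norm_num) (by rw [hTK]; norm_num)
      (by rw [hTK]; norm_num) (by norm_num) w hw0 hw2
  · have hs_eq : s = -430 := s_unique (by norm_num [pow_split_big]) (by norm_num [pow_split_big]) hs hs'
    rw [hs_eq] at hT
    have hTK : T = 204128152598478183127259193653345185577 := by
      rw [hT, Int.floor_eq_iff]
      constructor <;> norm_num [pow_split_big]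
    exact cert_aux T 11986068104618252262 2772199693294509526486 1454824093884153335 (-14199110790225053465201) (by norm_num) (by norm_num) (by norm_num)
      (by norm_num) (by norm_num) (by norm_num) (by rw [hTK]; norm_num)
      (by rw [hTK]; norm_num) (by norm_num) w hw0 hw2
  · have hs_eq : s = -432 := s_unique (by norm_num [pow_split_big]) (by norm_num [pow_split_big]) hs hs'
    rw [hs_eq] at hT
    have hTK : T = 255160190748097728909073992066681481971 := by
      rw [hT, Int.floor_eq_iff]
      constructor <;> norm_num [pow_split_big]
    exact cert_aux T 48526202056026670382 6749311520846014232234 290964818776830667 (-3549850438760957573967) (by norm_num) (by norm_num) (by norm_num)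
      (by norm_num) (by norm_num) (by norm_num) (by rw [hTK]; norm_num)
      (by rw [hTK]; norm_num) (by norm_num) w hw0 hw2
  · have hs_eq : s = -434 := s_unique (by norm_num [pow_split_big]) (by norm_num [pow_split_big]) hs hs'
    rw [hs_eq] at hT
    have hTK : T = 318950238435122161136342490083351852464 := by
      rw [hT, Int.floor_eq_iff]
      constructor <;> norm_num [pow_split_big]
    exact cert_aux T 38879154608576702439 5871568699807919014352 290964818776830667 (-4437240307246502759792) (by norm_num) (by norm_num) (by norm_num)
      (by norm_num) (by norm_num) (by norm_num) (by rw [hTK]; norm_num)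
      (by rw [hTK]; norm_num) (by norm_num) w hw0 hw2
  · have hs_eq : s = -437 := s_unique (by norm_num [pow_split_big]) (by norm_num [pow_split_big]) hs hs'
    rw [hs_eq] at hT
    have hTK : T = 199343899021951350710214056302094907790 := by
      rw [hT, Int.floor_eq_iff]
      constructor <;> norm_num [pow_split_big]
    exact cert_aux T 15027925169632385775 6459787520604295358354 1163859275107322668 (-11093100768116256899480) (by norm_num) (by norm_num) (by norm_num)
      (by norm_num) (by norm_num) (by norm_num) (by rw [hTK]; norm_num)
      (by rw [hTK]; norm_num) (by norm_num) w hw0 hw2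
  · have hs_eq : s = -439 := s_unique (by norm_num [pow_split_big]) (by norm_num [pow_split_big]) hs hs'
    rw [hs_eq] at hT
    have hTK : T = 249179873777439188387767570377618634737 := by
      rw [hT, Int.floor_eq_iff]
      constructor <;> norm_num [pow_split_big]
    exact cert_aux T 3005585033926477155 1613444087634110601011 1649852066502813517 (-57081275646765609743747) (by norm_num) (by norm_num) (by norm_num)
      (by norm_num) (by norm_num) (by norm_num) (by rw [hTK]; norm_num)
      (by rw [hTK]; norm_num) (by norm_num) w hw0 hw2
  · have hs_eq : s = -441 := s_unique (by norm_num [pow_split_big]) (by norm_num [pow_split_big]) hs hs'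
    rw [hs_eq] at hT
    have hTK : T = 311474842221798985484709462972023293421 := by
      rw [hT, Int.floor_eq_iff]
      constructor <;> norm_num [pow_split_big]
    exact cert_aux T 2404468027141181724 1612842970627325305580 1649852066502813517 (-71352007021473637883063) (by norm_num) (by norm_num) (by norm_num)
      (by norm_num) (by norm_num) (by norm_num) (by rw [hTK]; norm_num)
      (by rw [hTK]; norm_num) (by norm_num) w hw0 hw2
  · have hs_eq : s = -444 := s_unique (by norm_num [pow_split_big]) (by norm_num [pow_split_big]) hs hs'
    rw [hs_eq] at hT
    have hTK : T = 194671776388624365927943414357514558388 := by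
      rw [hT, Int.floor_eq_iff]
      constructor <;> norm_num [pow_split_big]
    exact cert_aux T 19235744217129453792 8061810385109485346176 13314097759862944013 (-3477320114036964697052) (by norm_num) (by norm_num) (by norm_num)
      (by norm_num) (by norm_num) (by norm_num) (by rw [hTK]; norm_num)
      (by rw [hTK]; norm_num) (by norm_num) w hw0 hw2
  · have hs_eq : s = -446 := s_unique (by norm_num [pow_split_big]) (by norm_num [pow_split_big]) hs hs'
    rw [hs_eq] at hT
    have hTK : T = 243339720485780457409929267946893197985 := by
      rw [hT, Int.floor_eq_iff]
      constructor <;> norm_num [pow_split_big]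
    exact cert_aux T 12725775821730974231 8931140413618726520439 588321938131969782 (-13277790556164932391754) (by norm_num) (by norm_num) (by norm_num)
      (by norm_num) (by norm_num) (by norm_num) (by rw [hTK]; norm_num)
      (by rw [hTK]; norm_num) (by norm_num) w hw0 hw2
  · have hs_eq : s = -448 := s_unique (by norm_num [pow_split_big]) (by norm_num [pow_split_big]) hs hs'
    rw [hs_eq] at hT
    have hTK : T = 304174650607225571762411584933616497482 := by
      rw [hT, Int.floor_eq_iff]
      constructor <;> norm_num [pow_split_big]
    exact cert_aux T 18286743700928939749 2365420225443535723826 5560967879197965518 (-8808049623446170657396) (by norm_num) (by norm_num) (by norm_num)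
      (by norm_num) (by norm_num) (by norm_num) (by rw [hTK]; norm_num)
      (by rw [hTK]; norm_num) (by norm_num) w hw0 hw2
  · have hs_eq : s = -451 := s_unique (by norm_num [pow_split_big]) (by norm_num [pow_split_big]) hs hs'
    rw [hs_eq] at hT
    have hTK : T = 190109156629515982351507240583510310926 := by
      rw [hT, Int.floor_eq_iff]
      constructor <;> norm_num [pow_split_big]
    exact cert_aux T 6523271917198991435 5289426578285111477274 3957127815862922323 (-23499500981471602201462) (by norm_num) (by norm_num) (by norm_num)
      (by norm_num) (by norm_num) (by norm_num) (by rw [hTK]; norm_num)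
      (by rw [hTK]; norm_num) (by norm_num) w hw0 hw2
  · have hs_eq : s = -453 := s_unique (by norm_num [pow_split_big]) (by norm_num [pow_split_big]) hs hs'
    rw [hs_eq] at hT
    have hTK : T = 237636445786894977939384050729387888658 := by
      rw [hT, Int.floor_eq_iff]
      constructor <;> norm_num [pow_split_big]
    exact cert_aux T 1304654383439798287 1323008971762997768462 172658662174109848 (-133365698312882258384208) (by norm_num) (by norm_num) (by norm_num)
      (by norm_num) (by norm_num) (by norm_num) (by rw [hTK]; norm_num)
      (by rw [hTK]; norm_num) (by norm_num) w hw0 hw2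
  · have hs_eq : s = -455 := s_unique (by norm_num [pow_split_big]) (by norm_num [pow_split_big]) hs hs'
    rw [hs_eq] at hT
    have hTK : T = 297045557233618722424230063411734860822 := by
      rw [hT, Int.floor_eq_iff]
      constructor <;> norm_num [pow_split_big]
    exact cert_aux T 5218617533759193148 6612435550048109245736 295462609122781627 (-33010820066584376544750) (by norm_num) (by norm_num) (by norm_num)
      (by norm_num) (by norm_num) (by norm_num) (by rw [hTK]; norm_num)
      (by rw [hTK]; norm_num) (by norm_num) w hw0 hw2
  · have hs_eq : s = -458 := s_unique (by norm_num [pow_split_big]) (by norm_num [pow_split_big]) hs hs'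
    rw [hs_eq] at hT
    have hTK : T = 185653473271011701515143789632334288014 := by
      rw [hT, Int.floor_eq_iff]
      constructor <;> norm_num [pow_split_big]
    exact cert_aux T 36825785345437133663 8306849436181601893042 13745683153247571161 (-1630413335352651787170) (by norm_num) (by norm_num) (by norm_num)
      (by norm_num) (by norm_num) (by norm_num) (by rw [hTK]; norm_num)
      (by rw [hTK]; norm_num) (by norm_num) w hw0 hw2
  · have hs_eq : s = -460 := s_unique (by norm_num [pow_split_big]) (by norm_num [pow_split_big]) hs hs'
    rw [hs_eq] at hT
    have hTK : T = 232066841588764626893929737040417860017 := by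
      rw [hT, Int.floor_eq_iff]
      constructor <;> norm_num [pow_split_big]
    exact cert_aux T 11098924684664223269 7855000950146521095317 3529011291444463856 (-13199853947885279486480) (by norm_num) (by norm_num) (by norm_num)
      (by norm_num) (by norm_num) (by norm_num) (by rw [hTK]; norm_num)
      (by rw [hTK]; norm_num) (by norm_num) w hw0 hw2
  · have hs_eq : s = -462 := s_unique (by norm_num [pow_split_big]) (by norm_num [pow_split_big]) hs hs'
    rw [hs_eq] at hT
    have hTK : T = 290083551985955783617412171300522325022 := by
      rw [hT, Int.floor_eq_iff]
      constructor <;> norm_num [pow_split_big]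
    exact cert_aux T 16950099075107698119 7159037263120102947154 11702348780886949700 (-5336076236153093178888) (by norm_num) (by norm_num) (by norm_num)
      (by norm_num) (by norm_num) (by norm_num) (by rw [hTK]; norm_num)
      (by rw [hTK]; norm_num) (by norm_num) w hw0 hw2
  · have hs_eq : s = -465 := s_unique (by norm_num [pow_split_big]) (by norm_num [pow_split_big]) hs hs'
    rw [hs_eq] at hT
    have hTK : T = 181302219991222364760882607062826453138 := by
      rw [hT, Int.floor_eq_iff]
      constructor <;> norm_num [pow_split_big]
    exact cert_aux T 16950099075107698119 4461685715143733568382 1773658974311421401 (-9811804769833891086910) (by norm_num) (by norm_num) (by norm_num)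
      (by norm_num) (by norm_num) (by norm_num) (by rw [hTK]; norm_num)
      (by rw [hTK]; norm_num) (by norm_num) w hw0 hw2
  · have hs_eq : s = -467 := s_unique (by norm_num [pow_split_big]) (by norm_num [pow_split_big]) hs hs'
    rw [hs_eq] at hT
    have hTK : T = 226627774989027955951103258828533066423 := by
      rw [hT, Int.floor_eq_iff]
      constructor <;> norm_num [pow_split_big]
    exact cert_aux T 16950099075107698119 5585582193467220809537 14979006439535295616 (-5342629551470389870720) (by norm_num) (by norm_num) (by norm_num)
      (by norm_num) (by norm_num) (by norm_num) (by rw [hTK]; norm_num)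
      (by rw [hTK]; norm_num) (by norm_num) w hw0 hw2
  · have hs_eq : s = -469 := s_unique (by norm_num [pow_split_big]) (by norm_num [pow_split_big]) hs hs'
    rw [hs_eq] at hT
    have hTK : T = 283284718736284944938879073535666333029 := by
      rw [hT, Int.floor_eq_iff]
      constructor <;> norm_num [pow_split_big]
    exact cert_aux T 12771642205857197494 124669231549879768782 10800549570284794991 (-13536088222781026682165) (by norm_num) (by norm_num) (by norm_num)
      (by norm_num) (by norm_num) (by norm_num) (by rw [hTK]; norm_num)
      (by rw [hTK]; norm_num) (by norm_num) w hw0 hw2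
  · have hs_eq : s = -472 := s_unique (by norm_num [pow_split_big]) (by norm_num [pow_split_big]) hs hs'
    rw [hs_eq] at hT
    have hTK : T = 177052949210178090586799420959791458143 := by
      rw [hT, Int.floor_eq_iff]
      constructor <;> norm_num [pow_split_big]
    exact cert_aux T 78600945870715587467 8995657909035026216341 4714438355228398497 (-1677016678698296913985) (by norm_num) (by norm_num) (by norm_num)
      (by norm_num) (by norm_num) (by norm_num) (by rw [hTK]; norm_num)
      (by rw [hTK]; norm_num) (by norm_num) w hw0 hw2
  · have hs_eq : s = -474 := s_unique (by norm_num [pow_split_big]) (by norm_num [pow_split_big]) hs hs'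
    rw [hs_eq] at hT
    have hTK : T = 221316186512722613233499276199739322679 := by
      rw [hT, Int.floor_eq_iff]
      constructor <;> norm_num [pow_split_big]
    exact cert_aux T 633986437412242303 8957139688661297270601 472146735958567201 (-268137419926313877018857) (by norm_num) (by norm_num) (by norm_num)
      (by norm_num) (by norm_num) (by norm_num) (by rw [hTK]; norm_num)
      (by rw [hTK]; norm_num) (by norm_num) w hw0 hw2
  · have hs_eq : s = -476 := s_unique (by norm_num [pow_split_big]) (by norm_num [pow_split_big]) hs hs'
    rw [hs_eq] at hT
    have hTK : T = 276645233140903266541874095249674153349 := by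
      rw [hT, Int.floor_eq_iff]
      constructor <;> norm_num [pow_split_big]
    exact cert_aux T 12202233064925295617 9392768297071309418885 7289506793400540674 (-8666931945200426585846) (by norm_num) (by norm_num) (by norm_num)
      (by norm_num) (by norm_num) (by norm_num) (by rw [hTK]; norm_num)
      (by rw [hTK]; norm_num) (by norm_num) w hw0 hw2
  · have hs_eq : s = -479 := s_unique (by norm_num [pow_split_big]) (by norm_num [pow_split_big]) hs hs'
    rw [hs_eq] at hT
    have hTK : T = 172903270713064541588671309531046345843 := by
      rw [hT, Int.floor_eq_iff]
      constructor <;> norm_num [pow_split_big]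
    exact cert_aux T 37050222253596407301 5326859678640977637439 1933257463055265281 (-4424437173766955555213) (by norm_num) (by norm_num) (by norm_num)
      (by norm_num) (by norm_num) (by norm_num) (by rw [hTK]; norm_num)
      (by rw [hTK]; norm_num) (by norm_num) w hw0 hw2
  · have hs_eq : s = -481 := s_unique (by norm_num [pow_split_big]) (by norm_num [pow_split_big]) hs hs'
    rw [hs_eq] at hT
    have hTK : T = 216129088391330676985839136913807932303 := by
      rw [hT, Int.floor_eq_iff]
      constructor <;> norm_num [pow_split_big]
    exact cert_aux T 37050222253596407301 6630786931611024741323 8956650421163493685 (-3099439741922583766117) (by norm_num) (by norm_num) (by norm_num)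
      (by norm_num) (by norm_num) (by norm_num) (by rw [hTK]; norm_num)
      (by rw [hTK]; norm_num) (by norm_num) w hw0 hw2
  · have hs_eq : s = -483 := s_unique (by norm_num [pow_split_big]) (by norm_num [pow_split_big]) hs hs'
    rw [hs_eq] at hT
    have hTK : T = 270161360489163346232298921142259915379 := by
      rw [hT, Int.floor_eq_iff]
      constructor <;> norm_num [pow_split_big]
    exact cert_aux T 93805075433752500709 8076959307598894621663 3582660168465397474 (-1548824205919175533690) (by norm_num) (by norm_num) (by norm_num)
      (by norm_num) (by norm_num) (by norm_num) (by rw [hTK]; norm_num)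
      (by rw [hTK]; norm_num) (by norm_num) w hw0 hw2
  · have hs_eq : s = -485 := s_unique (by norm_num [pow_split_big]) (by norm_num [pow_split_big]) hs hs'
    rw [hs_eq] at hT
    have hTK : T = 337701700611454182790373651427824894224 := by
      rw [hT, Int.floor_eq_iff]
      constructor <;> norm_num [pow_split_big]
    exact cert_aux T 18044483053057420647 2410956999142781894000 14330640673861589896 (-7740538369427412270976) (by norm_num) (by norm_num) (by norm_num)
      (by norm_num) (by norm_num) (by norm_num) (by rw [hTK]; norm_num)
      (by rw [hTK]; norm_num) (by norm_num) w hw0 hw2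
  · have hs_eq : s = -488 := s_unique (by norm_num [pow_split_big]) (by norm_num [pow_split_big]) hs hs'
    rw [hs_eq] at hT
    have hTK : T = 211063562882158864243983532142390558890 := by
      rw [hT, Int.floor_eq_iff]
      constructor <;> norm_num [pow_split_big]
    exact cert_aux T 13797763735191116989 5979856558963640292738 8493438635732607316 (-8946016868998803217976) (by norm_num) (by norm_num) (by norm_num)
      (by norm_num) (by norm_num) (by norm_num) (by rw [hTK]; norm_num)
      (by rw [hTK]; norm_num) (by norm_num) w hw0 hw2
  · have hs_eq : s = -490 := s_unique (by norm_num [pow_split_big]) (by norm_num [pow_split_big]) hs hs'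
    rw [hs_eq] at hT
    have hTK : T = 263829453602698580304979415177988198613 := by
      rw [hT, Int.floor_eq_iff]
      constructor <;> norm_num [pow_split_big]
    exact cert_aux T 4881282786821627267 8960341495115542642175 3189113536274097643 (-29838268314433421362041) (by norm_num) (by norm_num) (by norm_num)
      (by norm_num) (by norm_num) (by norm_num) (by rw [hTK]; norm_num)
      (by rw [hTK]; norm_num) (by norm_num) w hw0 hw2
  · have hs_eq : s = -492 := s_unique (by norm_num [pow_split_big]) (by norm_num [pow_split_big]) hs hs'
    rw [hs_eq] at hT
    have hTK : T = 329786817003373225381224268972485248266 := by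
      rw [hT, Int.floor_eq_iff]
      constructor <;> norm_num [pow_split_big]
    exact cert_aux T 22714244683560606711 7498193521365046356646 9723520580679062213 (-4460449125739150502734) (by norm_num) (by norm_num) (by norm_num)
      (by norm_num) (by norm_num) (by norm_num) (by rw [hTK]; norm_num)
      (by rw [hTK]; norm_num) (by norm_num) w hw0 hw2
  · have hs_eq : s = -495 := s_unique (by norm_num [pow_split_big]) (by norm_num [pow_split_big]) hs hs'
    rw [hs_eq] at hT
    have hTK : T = 206116760627108265863265168107803280166 := by
      rw [hT, Int.floor_eq_iff]
      constructor <;> norm_num [pow_split_big]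
    exact cert_aux T 22060803979120110254 2628469278252955525076 8416639171798069299 (-6894657806590755422062) (by norm_num) (by norm_num) (by norm_num)
      (by norm_num) (by norm_num) (by norm_num) (by rw [hTK]; norm_num)
      (by rw [hTK]; norm_num) (by norm_num) w hw0 hw2
  · have hs_eq : s = -497 := s_unique (by norm_num [pow_split_big]) (by norm_num [pow_split_big]) hs hs'
    rw [hs_eq] at hT
    have hTK : T = 257645950783885332329081460134754100208 := by
      rw [hT, Int.floor_eq_iff]
      constructor <;> norm_num [pow_split_big]
    exact cert_aux T 24789636940584518445 5678763187497414402352 13874305094726885681 (-3849821563269225361168) (by norm_num) (by norm_num) (by norm_num)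
      (by norm_num) (by norm_num) (by norm_num) (by rw [hTK]; norm_num)
      (by rw [hTK]; norm_num) (by norm_num) w hw0 hw2
  · have hs_eq : s = -499 := s_unique (by norm_num [pow_split_big]) (by norm_num [pow_split_big]) hs hs'
    rw [hs_eq] at hT
    have hTK : T = 322057438479856665411351825168442625260 := by
      rw [hT, Int.floor_eq_iff]
      constructor <;> norm_num [pow_split_big]
    exact cert_aux T 19831709552467614756 5678763187497414402352 13874305094726885681 (-4812276954086531701460) (by norm_num) (by norm_num) (by norm_num)
      (by norm_num) (by norm_num) (by norm_num) (by rw [hTK]; norm_num)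
      (by rw [hTK]; norm_num) (by norm_num) w hw0 hw2
  · have hs_eq : s = -502 := s_unique (by norm_num [pow_split_big]) (by norm_num [pow_split_big]) hs hs'
    rw [hs_eq] at hT
    have hTK : T = 201285899049910415882094890730276640787 := by
      rw [hT, Int.floor_eq_iff]
      constructor <;> norm_num [pow_split_big]
    exact cert_aux T 2382961783096291630 2621568554504438380138 1880580259240981049 (-71043733471755646578117) (by norm_num) (by norm_num) (by norm_num)
      (by norm_num) (by norm_num) (by norm_num) (by rw [hTK]; norm_num)
      (by rw [hTK]; norm_num) (by norm_num) w hw0 hw2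
  · have hs_eq : s = -504 := s_unique (by norm_num [pow_split_big]) (by norm_num [pow_split_big]) hs hs'
    rw [hs_eq] at hT
    have hTK : T = 251607373812388019852618613412845800984 := by
      rw [hT, Int.floor_eq_iff]
      constructor <;> norm_num [pow_split_big]
    exact cert_aux T 1906369426477033304 2622045146861057638464 450803189383206071 (-90770730554775541206232) (by norm_num) (by norm_num) (by norm_num)
      (by norm_num) (by norm_num) (by norm_num) (by rw [hTK]; norm_num)
      (by rw [hTK]; norm_num) (by norm_num) w hw0 hw2
  · have hs_eq : s = -506 := s_unique (by norm_num [pow_split_big]) (by norm_num [pow_split_big]) hs hs'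
    rw [hs_eq] at hT
    have hTK : T = 314509217265485024815773266766057251230 := by
      rw [hT, Int.floor_eq_iff]
      constructor <;> norm_num [pow_split_big]
    exact cert_aux T 31444779869976628614 8366560233263910985396 11909651082034247699 (-2371832750520688603462) (by norm_num) (by norm_num) (by norm_num)
      (by norm_num) (by norm_num) (by norm_num) (by rw [hTK]; norm_num)
      (by rw [hTK]; norm_num) (by norm_num) w hw0 hw2
  · have hs_eq : s = -509 := s_unique (by norm_num [pow_split_big]) (by norm_num [pow_split_big]) hs hs'
    rw [hs_eq] at hT
    have hTK : T = 196568260790928140509858291728785782019 := by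
      rw [hT, Int.floor_eq_iff]
      constructor <;> norm_num [pow_split_big]
    exact cert_aux T 19723702597211200065 1207133702520022320067 8191199133714590666 (-8331939630259731901090) (by norm_num) (by norm_num) (by norm_num)
      (by norm_num) (by norm_num) (by norm_num) (by rw [hTK]; norm_num)
      (by rw [hTK]; norm_num) (by norm_num) w hw0 hw2
  · have hs_eq : s = -511 := s_unique (by norm_num [pow_split_big]) (by norm_num [pow_split_big]) hs hs'
    rw [hs_eq] at hT
    have hTK : T = 245710325988660175637322864660982227523 := by
      rw [hT, Int.floor_eq_iff]
      constructor <;> norm_num [pow_split_big]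
    exact cert_aux T 15778962077768960052 1195299480961695600028 4246458614272350653 (-10719892807415374719369) (by norm_num) (by norm_num) (by norm_num)
      (by norm_num) (by norm_num) (by norm_num) (by rw [hTK]; norm_num)
      (by rw [hTK]; norm_num) (by norm_num) w hw0 hw2
  · have hs_eq : s = -513 := s_unique (by norm_num [pow_split_big]) (by norm_num [pow_split_big]) hs hs'
    rw [hs_eq] at hT
    have hTK : T = 307137907485825219546653580826227784404 := by
      rw [hT, Int.floor_eq_iff]
      constructor <;> norm_num [pow_split_big]
    exact cert_aux T 11773877939360697911 3878216152300379454348 4246458614272350653 (-13398804394615650311548) (by norm_num) (by norm_num) (by norm_num)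
      (by norm_num) (by norm_num) (by norm_num) (by rw [hTK]; norm_num)
      (by rw [hTK]; norm_num) (by norm_num) w hw0 hw2
  · have hs_eq : s = -516 := s_unique (by norm_num [pow_split_big]) (by norm_num [pow_split_big]) hs hs'
    rw [hs_eq] at hT
    have hTK : T = 191961192178640762216658488016392365253 := by
      rw [hT, Int.floor_eq_iff]
      constructor <;> norm_num [pow_split_big]
    exact cert_aux T 23547755878721395822 4859544068314835015846 10461493655034299269 (-5239840393367665710759) (by norm_num) (by norm_num) (by norm_num)
      (by norm_num) (by norm_num) (by norm_num) (by rw [hTK]; norm_num)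
      (by rw [hTK]; norm_num) (by norm_num) w hw0 hw2
  · have hs_eq : s = -518 := s_unique (by norm_num [pow_split_big]) (by norm_num [pow_split_big]) hs hs'
    rw [hs_eq] at hT
    have hTK : T = 239951490223300952770823110020490456566 := by
      rw [hT, Int.floor_eq_iff]
      constructor <;> norm_num [pow_split_big]
    exact cert_aux T 7326803620481698475 3737900431594213510994 6269380069105201588 (-20580632593435108448520) (by norm_num) (by norm_num) (by norm_num)
      (by norm_num) (by norm_num) (by norm_num) (by rw [hTK]; norm_num)
      (by rw [hTK]; norm_num) (by norm_num) w hw0 hw2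
  · have hs_eq : s = -520 := s_unique (by norm_num [pow_split_big]) (by norm_num [pow_split_big]) hs hs'
    rw [hs_eq] at hT
    have hTK : T = 299939362779126190963528887525613070707 := by
      rw [hT, Int.floor_eq_iff]
      constructor <;> norm_num [pow_split_big]
    exact cert_aux T 2930721448192679390 1867484855073010415802 2281235069536025311 (-57994047856412412778195) (by norm_num) (by norm_num) (by norm_num)
      (by norm_num) (by norm_num) (by norm_num) (by rw [hTK]; norm_num)
      (by rw [hTK]; norm_num) (by norm_num) w hw0 hw2
  · have hs_eq : s = -523 := s_unique (by norm_num [pow_split_big]) (by norm_num [pow_split_big]) hs hs'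
    rw [hs_eq] at hT
    have hTK : T = 187462101736953869352205554703508169192 := by
      rw [hT, Int.floor_eq_iff]
      constructor <;> norm_num [pow_split_big]
    exact cert_aux T 4689154317108287024 1868070999362648951680 4625812228090168823 (-35311959256192741507368) (by norm_num) (by norm_num) (by norm_num)
      (by norm_num) (by norm_num) (by norm_num) (by rw [hTK]; norm_num)
      (by rw [hTK]; norm_num) (by norm_num) w hw0 hw2
  · have hs_eq : s = -525 := s_unique (by norm_num [pow_split_big]) (by norm_num [pow_split_big]) hs hs'
    rw [hs_eq] at hT
    have hTK : T = 234327627171192336690256943379385211490 := by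
      rw [hT, Int.floor_eq_iff]
      constructor <;> norm_num [pow_split_big]
    exact cert_aux T 18756617268433148096 9340354996813244758400 3738655035883005979 (-7426936564526198663082) (by norm_num) (by norm_num) (by norm_num)
      (by norm_num) (by norm_num) (by norm_num) (by rw [hTK]; norm_num)
      (by rw [hTK]; norm_num) (by norm_num) w hw0 hw2
  · have hs_eq : s = -527 := s_unique (by norm_num [pow_split_big]) (by norm_num [pow_split_big]) hs hs'
    rw [hs_eq] at hT
    have hTK : T = 292909533963990420862821179224231514363 := by
      rw [hT, Int.floor_eq_iff]
      constructor <;> norm_num [pow_split_big]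
    exact cert_aux T 8998108921726461630 961208270604386278474 2978255610902781143 (-19044206891581806790963) (by norm_num) (by norm_num) (by norm_num)
      (by norm_num) (by norm_num) (by norm_num) (by rw [hTK]; norm_num)
      (by rw [hTK]; norm_num) (by norm_num) w hw0 hw2
  · have hs_eq : s = -530 := s_unique (by norm_num [pow_split_big]) (by norm_num [pow_split_big]) hs hs'
    rw [hs_eq] at hT
    have hTK : T = 183068458727494013039263237015144696477 := by
      rw [hT, Int.floor_eq_iff]
      constructor <;> norm_num [pow_split_big]
    exact cert_aux T 14396974274762338608 963007892388731570800 6577499179593365795 (-11661505052190083504009) (by norm_num) (by norm_num) (by norm_num)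
      (by norm_num) (by norm_num) (by norm_num) (by rw [hTK]; norm_num)
      (by rw [hTK]; norm_num) (by norm_num) w hw0 hw2
  · have hs_eq : s = -532 := s_unique (by norm_num [pow_split_big]) (by norm_num [pow_split_big]) hs hs'
    rw [hs_eq] at hT
    have hTK : T = 228835573409367516299079046268930870596 := by
      rw [hT, Int.floor_eq_iff]
      constructor <;> norm_num [pow_split_big]
    exact cert_aux T 13081474438843665449 4115865759923724423140 5261999343674692636 (-11662820552026002177168) (by norm_num) (by norm_num) (by norm_num)
      (by norm_num) (by norm_num) (by norm_num) (by rw [hTK]; norm_num)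
      (by rw [hTK]; norm_num) (by norm_num) w hw0 hw2
  · have hs_eq : s = -534 := s_unique (by norm_num [pow_split_big]) (by norm_num [pow_split_big]) hs hs'
    rw [hs_eq] at hT
    have hTK : T = 286044466761709395373848807836163588245 := by
      rw [hT, Int.floor_eq_iff]
      constructor <;> norm_num [pow_split_big]
    exact cert_aux T 13081474438843665449 5144832199904655528925 1593304587171021019 (-12691786992006933282953) (by norm_num) (by norm_num) (by norm_num)
      (by norm_num) (by norm_num) (by norm_num) (by rw [hTK]; norm_num)
      (by rw [hTK]; norm_num) (by norm_num) w hw0 hw2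
  · have hs_eq : s = -537 := s_unique (by norm_num [pow_split_big]) (by norm_num [pow_split_big]) hs hs'
    rw [hs_eq] at hT
    have hTK : T = 178777791726068372108655504897602242653 := by
      rw [hT, Int.floor_eq_iff]
      constructor <;> norm_num [pow_split_big]
    exact cert_aux T 26162948877687330898 6427769881271108494794 3890938557505549905 (-5703275838335072894099) (by norm_num) (by norm_num) (by norm_num)
      (by norm_num) (by norm_num) (by norm_num) (by rw [hTK]; norm_num)
      (by rw [hTK]; norm_num) (by norm_num) w hw0 hw2
  · have hs_eq : s = -539 := s_unique (by norm_num [pow_split_big]) (by norm_num [pow_split_big]) hs hs'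
    rw [hs_eq] at hT
    have hTK : T = 223472239657585465135819381122002803316 := by
      rw [hT, Int.floor_eq_iff]
      constructor <;> norm_num [pow_split_big]
    exact cert_aux T 26941136589188440879 6602158107857820284748 3112750846004439924 (-5704054026046574004080) (by norm_num) (by norm_num) (by norm_num)
      (by norm_num) (by norm_num) (by norm_num) (by rw [hTK]; norm_num)
      (by rw [hTK]; norm_num) (by norm_num) w hw0 hw2
  · have hs_eq : s = -541 := s_unique (by norm_num [pow_split_big]) (by norm_num [pow_split_big]) hs hs'
    rw [hs_eq] at hT
    have hTK : T = 279340299571981831419774226402503504145 := by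
      rw [hT, Int.floor_eq_iff]
      constructor <;> norm_num [pow_split_big]
    exact cert_aux T 17409782291914840497 2099591567870078211521 15756855989282480230 (-8107028998164237865786) (by norm_num) (by norm_num) (by norm_num)
      (by norm_num) (by norm_num) (by norm_num) (by rw [hTK]; norm_num)
      (by rw [hTK]; norm_num) (by norm_num) w hw0 hw2
  · have hs_eq : s = -544 := s_unique (by norm_num [pow_split_big]) (by norm_num [pow_split_big]) hs hs'
    rw [hs_eq] at hT
    have hTK : T = 174587687232488644637358891501564690091 := by
      rw [hT, Int.floor_eq_iff]
      constructor <;> norm_num [pow_split_big]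
    exact cert_aux T 7955668698345352359 4355363979992267589005 1343963487815911291 (-21163666824547471144663) (by norm_num) (by norm_num) (by norm_num)
      (by norm_num) (by norm_num) (by norm_num) (by rw [hTK]; norm_num)
      (by rw [hTK]; norm_num) (by norm_num) w hw0 hw2
  · have hs_eq : s = -546 := s_unique (by norm_num [pow_split_big]) (by norm_num [pow_split_big]) hs hs'
    rw [hs_eq] at hT
    have hTK : T = 218234609040610805796698614376955862613 := by
      rw [hT, Int.floor_eq_iff]
      constructor <;> norm_num [pow_split_big]
    exact cert_aux T 27586858969500562537 7907773358466276259037 11675521572809857819 (-2968703088466874684937) (by norm_num) (by norm_num) (by norm_num)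
      (by norm_num) (by norm_num) (by norm_num) (by rw [hTK]; norm_num)
      (by rw [hTK]; norm_num) (by norm_num) w hw0 hw2
  · have hs_eq : s = -548 := s_unique (by norm_num [pow_split_big]) (by norm_num [pow_split_big]) hs hs'
    rw [hs_eq] at hT
    have hTK : T = 272793261300763507245873267971194828267 := by
      rw [hT, Int.floor_eq_iff]
      constructor <;> norm_num [pow_split_big]
    exact cert_aux T 8699639273238253451 4702587180804785490841 5951764599143208736 (-16809418800417542907296) (by norm_num) (by norm_num) (by norm_num)
      (by norm_num) (by norm_num) (by norm_num) (by rw [hTK]; norm_num)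
      (by rw [hTK]; norm_num) (by norm_num) w hw0 hw2
  · have hs_eq : s = -551 := s_unique (by norm_num [pow_split_big]) (by norm_num [pow_split_big]) hs hs'
    rw [hs_eq] at hT
    have hTK : T = 170495788312977192028670792481996767667 := by
      rw [hT, Int.floor_eq_iff]
      constructor <;> norm_num [pow_split_big]
    exact cert_aux T 1099149869638017886 5378138889039286851770 175336199355450395 (-157650557233088952976927) (by norm_num) (by norm_num) (by norm_num)
      (by norm_num) (by norm_num) (by norm_num) (by rw [hTK]; norm_num)
      (by rw [hTK]; norm_num) (by norm_num) w hw0 hw2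
  · have hs_eq : s = -553 := s_unique (by norm_num [pow_split_big]) (by norm_num [pow_split_big]) hs hs'
    rw [hs_eq] at hT
    have hTK : T = 213119735391221490035838490602495959583 := by
      rw [hT, Int.floor_eq_iff]
      constructor <;> norm_num [pow_split_big]
    exact cert_aux T 7729116327337215281 7640279133576018797295 3332516848785143737 (-19247117862011501407897) (by norm_num) (by norm_num) (by norm_num)
      (by norm_num) (by norm_num) (by norm_num) (by rw [hTK]; norm_num)
      (by rw [hTK]; norm_num) (by norm_num) w hw0 hw2
  · have hs_eq : s = -555 := s_unique (by norm_num [pow_split_big]) (by norm_num [pow_split_big]) hs hs'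
    rw [hs_eq] at hT
    have hTK : T = 266399669239026862544798113253119949479 := by
      rw [hT, Int.floor_eq_iff]
      constructor <;> norm_num [pow_split_big]
    exact cert_aux T 2425143161177857365 8632525318081179214963 1814747375214572744 (-65381179032766719377800) (by norm_num) (by norm_num) (by norm_num)
      (by norm_num) (by norm_num) (by norm_num) (by rw [hTK]; norm_num)
      (by rw [hTK]; norm_num) (by norm_num) w hw0 hw2
  · have hs_eq : s = -557 := s_unique (by norm_num [pow_split_big]) (by norm_num [pow_split_big]) hs hs'
    rw [hs_eq] at hT
    have hTK : T = 332999586548783578180997641566399936849 := by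
      rw [hT, Int.floor_eq_iff]
      constructor <;> norm_num [pow_split_big]
    exact cert_aux T 485028632235571473 2158252586678353696609 468588649560290354 (-357119616629955334068782) (by norm_num) (by norm_num) (by norm_num)
      (by norm_num) (by norm_num) (by norm_num) (by rw [hTK]; norm_num)
      (by rw [hTK]; norm_num) (by norm_num) w hw0 hw2
  · have hs_eq : s = -560 := s_unique (by norm_num [pow_split_big]) (by norm_num [pow_split_big]) hs hs'
    rw [hs_eq] at hT
    have hTK : T = 208124741592989736363123525978999960531 := by
      rw [hT, Int.floor_eq_iff]
      constructor <;> norm_num [pow_split_big]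
    exact cert_aux T 19203845839993574107 8514219310400040610689 15323616782109002323 (-2278498708888434586775) (by norm_num) (by norm_num) (by norm_num)
      (by norm_num) (by norm_num) (by norm_num) (by rw [hTK]; norm_num)
      (by rw [hTK]; norm_num) (by norm_num) w hw0 hw2
  · have hs_eq : s = -562 := s_unique (by norm_num [pow_split_big]) (by norm_num [pow_split_big]) hs hs'
    rw [hs_eq] at hT
    have hTK : T = 260155926991237170453904407473749950664 := by
      rw [hT, Int.floor_eq_iff]
      constructor <;> norm_num [pow_split_big]
    exact cert_aux T 27621970097682061144 6242626094036026539200 1512631733267971751 (-5965605528933029252488) (by norm_num) (by norm_num) (by norm_num)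
      (by norm_num) (by norm_num) (by norm_num) (by rw [hTK]; norm_num)
      (by rw [hTK]; norm_num) (by norm_num) w hw0 hw2
  · have hs_eq : s = -564 := s_unique (by norm_num [pow_split_big]) (by norm_num [pow_split_big]) hs hs'
    rw [hs_eq] at hT
    have hTK : T = 325194908739046463067380509342187438330 := by
      rw [hT, Int.floor_eq_iff]
      constructor <;> norm_num [pow_split_big]
    exact cert_aux T 11653840732380013158 138510282551498643356 8852183832725950081 (-14844758681056823809542) (by norm_num) (by norm_num) (by norm_num)
      (by norm_num) (by norm_num) (by norm_num) (by rw [hTK]; norm_num)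
      (by rw [hTK]; norm_num) (by norm_num) w hw0 hw2
  · have hs_eq : s = -567 := s_unique (by norm_num [pow_split_big]) (by norm_num [pow_split_big]) hs hs'
    rw [hs_eq] at hT
    have hTK : T = 203246817961904039417112818338867148956 := by
      rw [hT, Int.floor_eq_iff]
      constructor <;> norm_num [pow_split_big]
    exact cert_aux T 5782199052813630494 3778999261776751866440 3248870033417823927 (-28007872597679272403068) (by norm_num) (by norm_num) (by norm_num)
      (by norm_num) (by norm_num) (by norm_num) (by rw [hTK]; norm_num)
      (by rw [hTK]; norm_num) (by norm_num) w hw0 hw2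
  · have hs_eq : s = -569 := s_unique (by norm_num [pow_split_big]) (by norm_num [pow_split_big]) hs hs'
    rw [hs_eq] at hT
    have hTK : T = 254058522452380049271391022923583936195 := by
      rw [hT, Int.floor_eq_iff]
      constructor <;> norm_num [pow_split_big]
    exact cert_aux T 14527051733436277971 4335029635910437498553 5925307255618033966 (-10224937037062884335094) (by norm_num) (by norm_num) (by norm_num)
      (by norm_num) (by norm_num) (by norm_num) (by rw [hTK]; norm_num)
      (by rw [hTK]; norm_num) (by norm_num) w hw0 hw2
  · have hs_eq : s = -571 := s_unique (by norm_num [pow_split_big]) (by norm_num [pow_split_big]) hs hs'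
    rw [hs_eq] at hT
    have hTK : T = 317573153065475061589238778654479920244 := by
      rw [hT, Int.floor_eq_iff]
      constructor <;> norm_num [pow_split_big]
    exact cert_aux T 14527051733436277971 5422418807821405942684 7645656151181682767 (-9139268214047479539764) (by norm_num) (by norm_num) (by norm_num)
      (by norm_num) (by norm_num) (by norm_num) (by rw [hTK]; norm_num)
      (by rw [hTK]; norm_num) (by norm_num) w hw0 hw2
  · have hs_eq : s = -574 := s_unique (by norm_num [pow_split_big]) (by norm_num [pow_split_big]) hs hs'
    rw [hs_eq] at hT
    have hTK : T = 198483220665921913493274236659049950152 := by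
      rw [hT, Int.floor_eq_iff]
      constructor <;> norm_num [pow_split_big]
    exact cert_aux T 33335792930010730577 9259368842023038491208 16209035077458032037 (-724120693895830872088) (by norm_num) (by norm_num) (by norm_num)
      (by norm_num) (by norm_num) (by norm_num) (by rw [hTK]; norm_num)
      (by rw [hTK]; norm_num) (by norm_num) w hw0 hw2
  · have hs_eq : s = -576 := s_unique (by norm_num [pow_split_big]) (by norm_num [pow_split_big]) hs hs'
    rw [hs_eq] at hT
    have hTK : T = 248104025832402391866592795823812437690 := by
      rw [hT, Int.floor_eq_iff]
      constructor <;> norm_num [pow_split_big]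
    exact cert_aux T 29910441359500190869 9078338668549080773186 16209035077458032037 (-905150867369788590110) (by norm_num) (by norm_num) (by norm_num)
      (by norm_num) (by norm_num) (by norm_num) (by rw [hTK]; norm_num)
      (by rw [hTK]; norm_num) (by norm_num) w hw0 hw2
  · have hs_eq : s = -578 := s_unique (by norm_num [pow_split_big]) (by norm_num [pow_split_big]) hs hs'
    rw [hs_eq] at hT
    have hTK : T = 310130032290502989833240994779765547113 := by
      rw [hT, Int.floor_eq_iff]
      constructor <;> norm_num [pow_split_big]
    exact cert_aux T 62328511514416254943 9116210423019087618679 501525759083174641 (-2721909337942622901031) (by norm_num) (by norm_num) (by norm_num)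
      (by norm_num) (by norm_num) (by norm_num) (by rw [hTK]; norm_num)
      (by rw [hTK]; norm_num) (by norm_num) w hw0 hw2
  · have hs_eq : s = -581 := s_unique (by norm_num [pow_split_big]) (by norm_num [pow_split_big]) hs hs'
    rw [hs_eq] at hT
    have hTK : T = 193831270181564368645775621737353466945 := by
      rw [hT, Int.floor_eq_iff]
      constructor <;> norm_num [pow_split_big]
    exact cert_aux T 22824996417617168485 9409798995093146289573 2006103036332698564 (-6806027159254265189180) (by norm_num) (by norm_num) (by norm_num)
      (by norm_num) (by norm_num) (by norm_num) (by rw [hTK]; norm_num)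
      (by rw [hTK]; norm_num) (by norm_num) w hw0 hw2
  · have hs_eq : s = -583 := s_unique (by norm_num [pow_split_big]) (by norm_num [pow_split_big]) hs hs'
    rw [hs_eq] at hT
    have hTK : T = 242289087726955460807219527171691833682 := by
      rw [hT, Int.floor_eq_iff]
      constructor <;> norm_num [pow_split_big]
    exact cert_aux T 18259997134093734788 9423493992943716590664 15701100886902999655 (-1438408877082794519554) (by norm_num) (by norm_num) (by norm_num)
      (by norm_num) (by norm_num) (by norm_num) (by rw [hTK]; norm_num)
      (by rw [hTK]; norm_num) (by norm_num) w hw0 hw2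
  · have hs_eq : s = -585 := s_unique (by norm_num [pow_split_big]) (by norm_num [pow_split_big]) hs hs'
    rw [hs_eq] at hT
    have hTK : T = 302861359658694326009024408964614792102 := by
      rw [hT, Int.floor_eq_iff]
      constructor <;> norm_num [pow_split_big]
    exact cert_aux T 165269021540792066747 8732409481490251617858 6280440354761199862 (-722344658718777859708) (by norm_num) (by norm_num) (by norm_num)
      (by norm_num) (by norm_num) (by norm_num) (by rw [hTK]; norm_num)
      (by rw [hTK]; norm_num) (by norm_num) w hw0 hw2
  · have hs_eq : s = -588 := s_unique (by norm_num [pow_split_big]) (by norm_num [pow_split_big]) hs hs'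
    rw [hs_eq] at hT
    have hTK : T = 189288349786683953755640255602884245064 := by
      rw [hT, Int.floor_eq_iff]
      constructor <;> norm_num [pow_split_big]
    exact cert_aux T 791028926800348134 6878540409276319079600 204350224833833227 (-218473604098646234456808) (by norm_num) (by norm_num) (by norm_num)
      (by norm_num) (by norm_num) (by norm_num) (by rw [hTK]; norm_num)
      (by rw [hTK]; norm_num) (by norm_num) w hw0 hw2
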